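/- arXiv:1907.01940 — 3 statements merged into one kernel-verified Lean document; each statement's English description precedes it below -/
import Mathlib

section
/- For d ≥ 2, in d-neighbour bootstrap percolation on [n]^d, for any percolating set A of size n^{d-1}, at least one of the two adjacent vertices (⌈n/2⌉, ..., ⌈n/2⌉) and (⌈n/2⌉+1, ⌈n/2⌉, ..., ⌈n/2⌉) is not in A (for the d=2 case, the pair (⌈n/2⌉, ⌈n/2⌉) and (⌊n/2⌋, ⌈(n+1)/2⌉)). -/
/-- The grid `[n]^d = {1,...,n}^d`, embedded in `ℕ^d`. -/
def gridSet (n d : ℕ) : Set (Fin d → ℕ) := {v | ∀ i, 1 ≤ v i ∧ v i ≤ n}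

/-- Adjacency: differ by 1 in exactly one coordinate. -/
def gridAdj {d : ℕ} (u v : Fin d → ℕ) : Prop :=
  ∃ j, (u j = v j + 1 ∨ v j = u j + 1) ∧ ∀ i, i ≠ j → u i = v i

/-- One round of `r`-neighbour bootstrap percolation on `[n]^d`. -/
def bpStep (n d r : ℕ) (S : Set (Fin d → ℕ)) : Set (Fin d → ℕ) :=
  S ∪ {v ∈ gridSet n d | r ≤ {u ∈ S | gridAdj u v}.ncard}

/-- Infected set after `t` rounds, starting from `A`. -/
def infected (n d r : ℕ) (A : Set (Fin d → ℕ)) (t : ℕ) : Set (Fin d → ℕ) :=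
  (bpStep n d r)^[t] A

/-- The closure of `A`: all eventually infected vertices. -/
def bpClosure (n d r : ℕ) (A : Set (Fin d → ℕ)) : Set (Fin d → ℕ) :=
  ⋃ t, infected n d r A t

/-- `A` percolates if every grid vertex is eventually infected. -/
def percolates (n d r : ℕ) (A : Set (Fin d → ℕ)) : Prop :=
  gridSet n d ⊆ bpClosure n d r A

/-- Percolation time: least `t` with the whole grid infected. -/
noncomputable def percTime (n d r : ℕ) (A : Set (Fin d → ℕ)) : ℕ :=
  sInf {t | gridSet n d ⊆ infected n d r A t}

/-- `V_k`: grid vertices of coordinate sum `k`. -/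
def hyperplane (n d k : ℕ) : Set (Fin d → ℕ) := {v ∈ gridSet n d | ∑ i, v i = k}

/-- The "cyclic combination" set `A = ⋃_{i=1}^d V_{in}`. -/
def diagUnion (n d : ℕ) : Set (Fin d → ℕ) :=
  ⋃ i ∈ Finset.Icc 1 d, hyperplane n d (i * n)

attribute [local instance] Classical.propDecidable

noncomputable section

def nbr {d : ℕ} (v : Fin d → ℕ) : Finset (Fin d → ℕ) :=
  Finset.image (fun p : Fin d × Bool =>
    Function.update v p.1 (if p.2 then v p.1 + 1 else v p.1 - 1)) Finset.univ

lemma gridAdj_symm {d : ℕ} {u v : Fin d → ℕ} (h : gridAdj u v) : gridAdj v u := by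
  obtain ⟨j, h1, h2⟩ := h
  exact ⟨j, h1.symm, fun i hi => (h2 i hi).symm⟩

lemma mem_nbr {d : ℕ} {v w : Fin d → ℕ} (hv : ∀ i, 1 ≤ v i) :
    w ∈ nbr v ↔ gridAdj v w := by
  constructor
  · intro h
    simp only [nbr, Finset.mem_image, Finset.mem_univ, true_and] at h
    obtain ⟨⟨j, b⟩, rfl⟩ := h
    refine ⟨j, ?_, ?_⟩
    · cases b
      · left; simp only [Function.update_self, Bool.false_eq_true, if_false]
        have := hv j; omega
      · right; simp [Function.update_self]
    · intro i hij; simp [Function.update_of_ne hij]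
  · rintro ⟨j, hj, hother⟩
    rcases hj with h1 | h2
    · refine Finset.mem_image.mpr ⟨⟨j, false⟩, Finset.mem_univ _, ?_⟩
      funext i
      by_cases hij : i = j
      · subst hij; simp only [Function.update_self, Bool.false_eq_true, if_false]; omega
      · rw [Function.update_of_ne hij]; exact hother i hij
    · refine Finset.mem_image.mpr ⟨⟨j, true⟩, Finset.mem_univ _, ?_⟩
      funext i
      by_cases hij : i = j
      · subst hij; simp only [Function.update_self, if_true]; omega
      · rw [Function.update_of_ne hij]; exact hother i hij

lemma nbr_card {d : ℕ} {v : Fin d → ℕ} (hv : ∀ i, 1 ≤ v i) : (nbr v).card = 2 * d := by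
  rw [nbr, Finset.card_image_of_injective _ ?_, Finset.card_univ]
  · simp [Fintype.card_prod, mul_comm]
  · rintro ⟨j, b⟩ ⟨j', b'⟩ h
    dsimp only at h
    have hval : ∀ (k : Fin d) (b : Bool), (if b then v k + 1 else v k - 1) ≠ v k := by
      intro k b; have := hv k; cases b <;> simp <;> omega
    by_cases hjj : j = j'
    · subst hjj
      have hh := congrFun h j
      simp only [Function.update_self] at hh
      have hb : b = b' := by
        cases b <;> cases b' <;> simp_all <;> omega
      rw [hb]
    · exfalso
      have h1 := congrFun h j
      rw [Function.update_self, Function.update_of_ne hjj] at h1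
      exact hval j b h1

def perimF {d : ℕ} (F : Finset (Fin d → ℕ)) : ℕ := ∑ v ∈ F, (nbr v \ F).card

lemma perim_lt_of_adj {d : ℕ} (F : Finset (Fin d → ℕ)) (hF : ∀ v ∈ F, ∀ i, 1 ≤ v i)
    {a b : Fin d → ℕ} (ha : a ∈ F) (hb : b ∈ F) (hab : gridAdj a b) :
    perimF F < 2 * d * F.card := by
  have hlt : ∑ v ∈ F, (nbr v \ F).card < ∑ _v ∈ F, 2 * d := by
    apply Finset.sum_lt_sum
    · intro v hv
      calc (nbr v \ F).card ≤ (nbr v).card := Finset.card_le_card (Finset.sdiff_subset)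
        _ = 2 * d := nbr_card (hF v hv)
    · refine ⟨b, hb, ?_⟩
      have hanb : a ∈ nbr b := (mem_nbr (hF b hb)).mpr (gridAdj_symm hab)
      have : nbr b \ F ⊂ nbr b := by
        refine Finset.ssubset_iff_of_subset Finset.sdiff_subset |>.mpr ⟨a, hanb, by simp [ha]⟩
      calc (nbr b \ F).card < (nbr b).card := Finset.card_lt_card this
        _ = 2 * d := nbr_card (hF b hb)
  simpa [perimF, Finset.sum_const, mul_comm] using hlt
lemma card_inter_eq_sum {d : ℕ} (G : Finset (Fin d → ℕ)) (v : Fin d → ℕ) :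
    (nbr v ∩ G).card = ∑ u ∈ G, (if u ∈ nbr v then 1 else 0) := by
  rw [← Finset.card_filter]
  congr 1
  ext u
  simp [Finset.mem_inter, Finset.mem_filter, and_comm]

lemma double_count {d : ℕ} (S N : Finset (Fin d → ℕ))
    (hS : ∀ v ∈ S, ∀ i, 1 ≤ v i) (hN : ∀ v ∈ N, ∀ i, 1 ≤ v i) :
    ∑ v ∈ N, (nbr v ∩ S).card = ∑ v ∈ S, (nbr v ∩ N).card := by
  simp only [card_inter_eq_sum]
  rw [Finset.sum_comm]
  apply Finset.sum_congr rfl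
  intro u hu
  apply Finset.sum_congr rfl
  intro v hv
  have hiff : (u ∈ nbr v) = (v ∈ nbr u) := by
    rw [eq_iff_iff, mem_nbr (hN v hv), mem_nbr (hS u hu)]
    exact ⟨gridAdj_symm, gridAdj_symm⟩
  simp only [hiff]

lemma perim_step {d : ℕ} (S N : Finset (Fin d → ℕ))
    (hS : ∀ v ∈ S, ∀ i, 1 ≤ v i) (hN : ∀ v ∈ N, ∀ i, 1 ≤ v i)
    (hdisj : Disjoint S N)
    (hinf : ∀ v ∈ N, d ≤ (nbr v ∩ S).card) :
    perimF (S ∪ N) ≤ perimF S := by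
  have hsplit : perimF (S ∪ N) = ∑ v ∈ S, (nbr v \ (S ∪ N)).card
      + ∑ v ∈ N, (nbr v \ (S ∪ N)).card := by
    rw [perimF, Finset.sum_union hdisj]
  -- (2): for each v, (nbr v \ (S∪N)) ∪ (nbr v ∩ N) = nbr v \ S, disjointly
  have h2 : ∀ v, (nbr v \ (S ∪ N)).card + (nbr v ∩ N).card = (nbr v \ S).card := by
    intro v
    rw [← Finset.card_union_of_disjoint]
    · congr 1
      ext x
      simp only [Finset.mem_union, Finset.mem_sdiff, Finset.mem_inter]
      have hx0 : x ∈ S → x ∉ N := fun h1 h2 => Finset.disjoint_left.mp hdisj h1 h2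
      tauto
    · rw [Finset.disjoint_left]
      intro x hx hx2
      simp only [Finset.mem_sdiff, Finset.mem_union, Finset.mem_inter] at hx hx2
      tauto
  -- (3): for v ∈ N, (nbr v \ (S∪N)).card ≤ (nbr v ∩ S).card
  have h3 : ∀ v ∈ N, (nbr v \ (S ∪ N)).card ≤ (nbr v ∩ S).card := by
    intro v hv
    have hcard : (nbr v).card = 2 * d := nbr_card (hN v hv)
    have hdisj2 : Disjoint (nbr v \ (S ∪ N)) (nbr v ∩ S) := by
      rw [Finset.disjoint_left]
      intro x hx hx2
      simp only [Finset.mem_sdiff, Finset.mem_union, Finset.mem_inter] at hx hx2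
      tauto
    have hsub : (nbr v \ (S ∪ N)) ∪ (nbr v ∩ S) ⊆ nbr v := by
      intro x hx
      simp only [Finset.mem_union, Finset.mem_sdiff, Finset.mem_inter] at hx
      tauto
    have := Finset.card_le_card hsub
    rw [Finset.card_union_of_disjoint hdisj2, hcard] at this
    have := hinf v hv
    omega
  have key : perimF (S ∪ N) + ∑ v ∈ S, (nbr v ∩ N).card
      ≤ perimF S + ∑ v ∈ S, (nbr v ∩ N).card := by
    calc perimF (S ∪ N) + ∑ v ∈ S, (nbr v ∩ N).card
        = ∑ v ∈ S, ((nbr v \ (S ∪ N)).card + (nbr v ∩ N).card)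
          + ∑ v ∈ N, (nbr v \ (S ∪ N)).card := by
          rw [hsplit, Finset.sum_add_distrib]; ring
      _ ≤ ∑ v ∈ S, (nbr v \ S).card + ∑ v ∈ N, (nbr v ∩ S).card := by
          apply Nat.add_le_add
          · exact le_of_eq (Finset.sum_congr rfl fun v _ => h2 v)
          · exact Finset.sum_le_sum h3
      _ = perimF S + ∑ v ∈ S, (nbr v ∩ N).card := by
          rw [perimF, double_count S N hS hN]
  omega
def gridF (n d : ℕ) : Finset (Fin d → ℕ) := Fintype.piFinset (fun _ : Fin d => Finset.Icc 1 n)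

lemma mem_gridF {n d : ℕ} {v : Fin d → ℕ} : v ∈ gridF n d ↔ ∀ i, 1 ≤ v i ∧ v i ≤ n := by
  simp [gridF, Fintype.mem_piFinset, Finset.mem_Icc]

lemma card_slice {n d : ℕ} (j : Fin d) (c : ℕ) (hc1 : 1 ≤ c) (hcn : c ≤ n) :
    ((gridF n d).filter (fun v => v j = c)).card = n ^ (d - 1) := by
  have heq : (gridF n d).filter (fun v => v j = c)
      = Fintype.piFinset (fun i : Fin d => if i = j then {c} else Finset.Icc 1 n) := by
    ext v
    simp only [Finset.mem_filter, mem_gridF, Fintype.mem_piFinset]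
    constructor
    · rintro ⟨h1, h2⟩ i
      by_cases hij : i = j
      · subst hij; simp [h2]
      · simp [hij, Finset.mem_Icc, h1 i]
    · intro h
      have hj : v j = c := by
        have := h j
        rw [if_pos rfl] at this
        simpa using this
      refine ⟨fun i => ?_, hj⟩
      by_cases hij : i = j
      · subst hij; rw [hj]; omega
      · have := h i; rw [if_neg hij] at this; simpa [Finset.mem_Icc] using this
  rw [heq, Fintype.card_piFinset]
  rw [← Finset.mul_prod_erase _ _ (Finset.mem_univ j), if_pos rfl, Finset.card_singleton, one_mul]
  rw [Finset.prod_congr rfl (fun i hi => by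
    rw [if_neg (Finset.ne_of_mem_erase hi)]), Finset.prod_const, Nat.card_Icc,
    Finset.card_erase_of_mem (Finset.mem_univ j), Finset.card_univ, Fintype.card_fin]
  norm_num

lemma perim_grid_ge (n d : ℕ) (hn : 1 ≤ n) :
    2 * d * n ^ (d - 1) ≤ perimF (gridF n d) := by
  have hpt : ∀ v ∈ gridF n d,
      (Finset.univ.filter (fun j : Fin d => v j = 1)).card
        + (Finset.univ.filter (fun j : Fin d => v j = n)).card
        ≤ (nbr v \ gridF n d).card := by
    intro v hv
    have hv' := mem_gridF.mp hv
    set lo : Finset (Fin d → ℕ) :=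
      (Finset.univ.filter (fun j : Fin d => v j = 1)).image (fun j => Function.update v j 0) with hlo
    set hi : Finset (Fin d → ℕ) :=
      (Finset.univ.filter (fun j : Fin d => v j = n)).image (fun j => Function.update v j (n+1)) with hhi
    have hlocard : lo.card = (Finset.univ.filter (fun j : Fin d => v j = 1)).card := by
      apply Finset.card_image_of_injOn
      intro j hj j' hj' h
      simp only [Finset.coe_filter, Set.mem_setOf_eq, Finset.mem_univ, true_and] at hj hj'
      by_contra hjj
      have hcf := congrFun h j
      dsimp only at hcf
      rw [Function.update_self, Function.update_of_ne hjj] at hcf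
      omega
    have hhicard : hi.card = (Finset.univ.filter (fun j : Fin d => v j = n)).card := by
      apply Finset.card_image_of_injOn
      intro j hj j' hj' h
      simp only [Finset.coe_filter, Set.mem_setOf_eq, Finset.mem_univ, true_and] at hj hj'
      by_contra hjj
      have hcf := congrFun h j
      dsimp only at hcf
      rw [Function.update_self, Function.update_of_ne hjj] at hcf
      have := (hv' j').2
      omega
    have hdisj : Disjoint lo hi := by
      rw [Finset.disjoint_left]
      rintro x hx hx'
      simp only [hlo, hhi, Finset.mem_image, Finset.mem_filter, Finset.mem_univ, true_and] at hx hx'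
      obtain ⟨j, hj1, rfl⟩ := hx
      obtain ⟨j', hj'1, hj'2⟩ := hx'
      have hcf := congrFun hj'2 j'
      rw [Function.update_self] at hcf
      by_cases hjj : j' = j
      · subst hjj; rw [Function.update_self] at hcf; omega
      · rw [Function.update_of_ne hjj] at hcf
        have := (hv' j').2
        omega
    have hsub : lo ∪ hi ⊆ nbr v \ gridF n d := by
      intro x hx
      rw [Finset.mem_union] at hx
      rw [Finset.mem_sdiff]
      rcases hx with hx | hx <;>
        simp only [hlo, hhi, Finset.mem_image, Finset.mem_filter, Finset.mem_univ, true_and] at hx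
      · obtain ⟨j, hj, rfl⟩ := hx
        refine ⟨?_, ?_⟩
        · rw [mem_nbr (fun i => (hv' i).1)]
          refine ⟨j, Or.inl ?_, fun i hij => (Function.update_of_ne hij _ _).symm⟩
          rw [Function.update_self]; omega
        · rw [mem_gridF]
          push_neg
          refine ⟨j, fun h => ?_⟩
          have h0 : Function.update v j 0 j = 0 := Function.update_self _ _ _
          omega
      · obtain ⟨j, hj, rfl⟩ := hx
        refine ⟨?_, ?_⟩
        · rw [mem_nbr (fun i => (hv' i).1)]
          refine ⟨j, Or.inr ?_, fun i hij => (Function.update_of_ne hij _ _).symm⟩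
          rw [Function.update_self]; omega
        · rw [mem_gridF]
          push_neg
          refine ⟨j, fun h => ?_⟩
          have h0 : Function.update v j (n+1) j = n + 1 := Function.update_self _ _ _
          omega
    calc (Finset.univ.filter (fun j : Fin d => v j = 1)).card
          + (Finset.univ.filter (fun j : Fin d => v j = n)).card
        = (lo ∪ hi).card := by rw [Finset.card_union_of_disjoint hdisj, hlocard, hhicard]
      _ ≤ (nbr v \ gridF n d).card := Finset.card_le_card hsub
  have hsum1 : ∑ v ∈ gridF n d, (Finset.univ.filter (fun j : Fin d => v j = 1)).card
      = d * n ^ (d - 1) := by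
    have h1 : ∀ v : Fin d → ℕ, (Finset.univ.filter (fun j : Fin d => v j = 1)).card
        = ∑ j : Fin d, (if v j = 1 then 1 else 0) := fun v => by rw [Finset.card_filter]
    simp only [h1]
    rw [Finset.sum_comm]
    have h2 : ∀ j : Fin d, ∑ v ∈ gridF n d, (if v j = 1 then 1 else 0)
        = n ^ (d - 1) := by
      intro j
      rw [← Finset.card_filter, card_slice j 1 le_rfl hn]
    rw [Finset.sum_congr rfl fun j _ => h2 j]
    simp [Finset.sum_const, Finset.card_univ]
  have hsumn : ∑ v ∈ gridF n d, (Finset.univ.filter (fun j : Fin d => v j = n)).card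
      = d * n ^ (d - 1) := by
    have h1 : ∀ v : Fin d → ℕ, (Finset.univ.filter (fun j : Fin d => v j = n)).card
        = ∑ j : Fin d, (if v j = n then 1 else 0) := fun v => by rw [Finset.card_filter]
    simp only [h1]
    rw [Finset.sum_comm]
    have h2 : ∀ j : Fin d, ∑ v ∈ gridF n d, (if v j = n then 1 else 0)
        = n ^ (d - 1) := by
      intro j
      rw [← Finset.card_filter, card_slice j n hn le_rfl]
    rw [Finset.sum_congr rfl fun j _ => h2 j]
    simp [Finset.sum_const, Finset.card_univ]
  calc 2 * d * n ^ (d - 1)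
      = ∑ v ∈ gridF n d, (Finset.univ.filter (fun j : Fin d => v j = 1)).card
        + ∑ v ∈ gridF n d, (Finset.univ.filter (fun j : Fin d => v j = n)).card := by
        rw [hsum1, hsumn]; ring
    _ = ∑ v ∈ gridF n d, ((Finset.univ.filter (fun j : Fin d => v j = 1)).card
        + (Finset.univ.filter (fun j : Fin d => v j = n)).card) := by
        rw [Finset.sum_add_distrib]
    _ ≤ ∑ v ∈ gridF n d, (nbr v \ gridF n d).card := Finset.sum_le_sum hpt
    _ = perimF (gridF n d) := rfl
lemma coe_gridF (n d : ℕ) : (↑(gridF n d) : Set (Fin d → ℕ)) = gridSet n d := by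
  ext v; simp [mem_gridF, gridSet]

lemma infected_subset_grid (n d r : ℕ) (A : Set (Fin d → ℕ)) (hA : A ⊆ gridSet n d) :
    ∀ t, infected n d r A t ⊆ gridSet n d := by
  intro t
  induction t with
  | zero => exact hA
  | succ t ih =>
    rw [infected, Function.iterate_succ_apply']
    rintro v (hv | hv)
    · exact ih hv
    · exact hv.1

lemma infected_succ (n d r : ℕ) (A : Set (Fin d → ℕ)) (t : ℕ) :
    infected n d r A (t + 1) = bpStep n d r (infected n d r A t) :=
  Function.iterate_succ_apply' _ _ _

lemma infected_mono (n d r : ℕ) (A : Set (Fin d → ℕ)) {s t : ℕ} (hst : s ≤ t) :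
    infected n d r A s ⊆ infected n d r A t := by
  induction t, hst using Nat.le_induction with
  | base => exact subset_rfl
  | succ t hst ih =>
    refine ih.trans ?_
    rw [infected_succ]
    exact Set.subset_union_left

lemma count_eq {n d : ℕ} {S : Set (Fin d → ℕ)} (hfin : S.Finite) (hS : S ⊆ gridSet n d)
    {v : Fin d → ℕ} (hv : v ∈ gridSet n d) :
    {u ∈ S | gridAdj u v}.ncard = (nbr v ∩ hfin.toFinset).card := by
  rw [← Set.ncard_coe_finset]
  congr 1
  ext u
  simp only [Set.mem_setOf_eq, Finset.coe_inter, Set.mem_inter_iff, Finset.mem_coe,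
    Set.Finite.mem_toFinset, Finset.mem_coe]
  rw [mem_nbr (fun i => (hv i).1)]
  exact ⟨fun ⟨h1, h2⟩ => ⟨gridAdj_symm h2, h1⟩, fun ⟨h1, h2⟩ => ⟨h2, gridAdj_symm h1⟩⟩
lemma no_adjacent_pair (n d : ℕ) (hn : 1 ≤ n)
    (A : Set (Fin d → ℕ)) (hA : A ⊆ gridSet n d) (hperc : percolates n d d A)
    (hcard : A.ncard = n ^ (d - 1))
    {a b : Fin d → ℕ} (ha : a ∈ A) (hb : b ∈ A) (hab : gridAdj a b) : False := by
  have hgridfin : (gridSet n d).Finite := by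
    rw [← coe_gridF]; exact (gridF n d).finite_toSet
  have hAfin : A.Finite := hgridfin.subset hA
  set AF := hAfin.toFinset with hAFdef
  have hAFcoe : (↑AF : Set (Fin d → ℕ)) = A := hAfin.coe_toFinset
  have hAFcard : AF.card = n ^ (d - 1) := by
    rw [← hcard, Set.ncard_eq_toFinset_card _ hAfin]
  -- perimeter does not increase along infection
  have hkey : ∀ t (F : Finset (Fin d → ℕ)), (↑F : Set (Fin d → ℕ)) = infected n d d A t →
      perimF F ≤ perimF AF := by
    intro t
    induction t with
    | zero =>
      intro F hF
      have : F = AF := Finset.coe_injective (by rw [hF, hAFcoe]; rfl)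
      rw [this]
    | succ t ih =>
      intro F hF
      set S := infected n d d A t with hSdef
      have hSfin : S.Finite := hgridfin.subset (infected_subset_grid n d d A hA t)
      have hSgrid : S ⊆ gridSet n d := infected_subset_grid n d d A hA t
      set SF := hSfin.toFinset with hSFdef
      have hSFcoe : (↑SF : Set (Fin d → ℕ)) = S := hSfin.coe_toFinset
      have hIH : perimF SF ≤ perimF AF := ih SF hSFcoe
      set NF := (gridF n d).filter (fun v => v ∉ S ∧ d ≤ (nbr v ∩ SF).card) with hNFdef
      have hFeq : F = SF ∪ NF := by
        apply Finset.coe_injective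
        rw [hF, infected_succ]
        ext v
        rw [Finset.mem_coe, Finset.mem_union, hNFdef, Finset.mem_filter, Set.Finite.mem_toFinset]
        show v ∈ bpStep n d d S ↔ _
        rw [bpStep, Set.mem_union, Set.mem_setOf_eq, mem_gridF]
        constructor
        · rintro (hv | ⟨hv1, hv2⟩)
          · left; exact hv
          · by_cases hvS : v ∈ S
            · left; exact hvS
            · right
              refine ⟨fun i => hv1 i, hvS, ?_⟩
              rwa [← count_eq hSfin hSgrid hv1]
        · rintro (hv | ⟨hv1, hv2, hv3⟩)
          · left; exact hv
          · right
            have hvg : v ∈ gridSet n d := fun i => hv1 i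
            exact ⟨hvg, by rwa [count_eq hSfin hSgrid hvg]⟩
      rw [hFeq]
      refine le_trans (perim_step SF NF ?_ ?_ ?_ ?_) hIH
      · intro v hv i
        exact (hSgrid (by rwa [Set.Finite.mem_toFinset] at hv) i).1
      · intro v hv i
        rw [hNFdef, Finset.mem_filter, mem_gridF] at hv
        exact (hv.1 i).1
      · rw [Finset.disjoint_left]
        intro x hx hx2
        rw [hNFdef, Finset.mem_filter] at hx2
        rw [Set.Finite.mem_toFinset] at hx
        exact hx2.2.1 hx
      · intro v hv
        rw [hNFdef, Finset.mem_filter] at hv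
        exact hv.2.2
  -- a uniform time at which everything is infected
  have hfull : ∃ t, infected n d d A t = gridSet n d := by
    have hchoice : ∀ v ∈ gridF n d, ∃ t, v ∈ infected n d d A t := by
      intro v hv
      have hvg : v ∈ gridSet n d := by rw [← coe_gridF]; exact hv
      have := hperc hvg
      rwa [bpClosure, Set.mem_iUnion] at this
    set f : (Fin d → ℕ) → ℕ := fun v =>
      if h : ∃ t, v ∈ infected n d d A t then h.choose else 0 with hf
    refine ⟨(gridF n d).sup f, ?_⟩
    apply Set.Subset.antisymm (infected_subset_grid n d d A hA _)
    intro v hv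
    have hvF : v ∈ gridF n d := by rwa [← Finset.mem_coe, coe_gridF]
    obtain ⟨t, ht⟩ := hchoice v hvF
    have hex : ∃ t, v ∈ infected n d d A t := ⟨t, ht⟩
    have h1 : v ∈ infected n d d A (f v) := by
      rw [hf]; simp only [dif_pos hex]; exact hex.choose_spec
    exact infected_mono n d d A (Finset.le_sup hvF) h1
  obtain ⟨t0, ht0⟩ := hfull
  have hgridperim : perimF (gridF n d) ≤ perimF AF := by
    apply hkey t0
    rw [coe_gridF, ht0]
  have hlt : perimF AF < 2 * d * AF.card := by
    apply perim_lt_of_adj AF (fun v hv i => (hA (by rwa [Set.Finite.mem_toFinset] at hv) i).1)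
      (by rwa [Set.Finite.mem_toFinset]) (by rwa [Set.Finite.mem_toFinset]) hab
  have hge := perim_grid_ge n d hn
  rw [hAFcard] at hlt
  omega
theorem centre_not_fully_infected (n d : ℕ) (hn : 1 ≤ n) (hd : 2 ≤ d)
    (A : Set (Fin d → ℕ)) (hA : A ⊆ gridSet n d) (hperc : percolates n d d A)
    (hcard : A.ncard = n ^ (d - 1)) :
    (d = 2 →
      (fun _ : Fin d => (n + 1) / 2) ∉ A ∨
      (fun i : Fin d => if i = (⟨0, by omega⟩ : Fin d) then n / 2 else (n + 2) / 2) ∉ A) ∧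
    (3 ≤ d →
      (fun _ : Fin d => (n + 1) / 2) ∉ A ∨
      (fun i : Fin d => if i = (⟨0, by omega⟩ : Fin d) then (n + 1) / 2 + 1 else (n + 1) / 2) ∉ A) := by
  constructor
  · intro hd2
    subst hd2
    by_contra h
    push_neg at h
    obtain ⟨h1, h2⟩ := h
    refine no_adjacent_pair n 2 hn A hA hperc hcard h1 h2 ?_
    rcases Nat.even_or_odd n with ⟨m, hm⟩ | ⟨m, hm⟩
    · have hne : (1 : Fin 2) ≠ (⟨0, by omega⟩ : Fin 2) := by
        intro hh; simpa using congrArg Fin.val hh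
      refine ⟨1, Or.inr ?_, ?_⟩
      · dsimp only
        rw [if_neg hne]
        omega
      · intro i hi
        have hiv : i = (⟨0, by omega⟩ : Fin 2) := by
          have h' : i.1 ≠ 1 := fun hh => hi (Fin.ext hh)
          exact Fin.ext (by omega)
        subst hiv
        dsimp only
        rw [if_pos rfl]
        omega
    · refine ⟨⟨0, by omega⟩, Or.inl ?_, ?_⟩
      · dsimp only
        rw [if_pos rfl]
        omega
      · intro i hi
        dsimp only
        rw [if_neg hi]
        omega
  · intro hd3
    by_contra h
    push_neg at h
    obtain ⟨h1, h2⟩ := h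
    refine no_adjacent_pair n d hn A hA hperc hcard h1 h2 ?_
    refine ⟨⟨0, by omega⟩, Or.inr ?_, ?_⟩
    · dsimp only
      rw [if_pos rfl]
    · intro i hi
      dsimp only
      rw [if_neg hi]
end
end

section
/- Fix n, d, s with 1 + ⌈d/n⌉ ≤ s ≤ d and let F_s, t_v, Pre(v) be as in the infection witness tree construction. Then every directed path u^1, u^2, ..., u^m with u^{i} ∈ Pre(u^{i-1}) for all 2 ≤ i ≤ m and u^1 ∈ F_s satisfies m ≤ (d+2)n^2 + n + 1. -/
/-- The slab `F_s = ⋃_{i=1}^{n-1} V_{(s-1)n+i}`. -/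
def Fs (n d s : ℕ) : Set (Fin d → ℕ) :=
  ⋃ i ∈ Finset.Icc 1 (n - 1), hyperplane n d ((s - 1) * n + i)

/-- `t_v = Σ v_i − (s−1)n`. -/
def tv (n s : ℕ) {d : ℕ} (v : Fin d → ℕ) : ℕ := (∑ i, v i) - (s - 1) * n

/-- The `j`-th standard basis vector. -/
def eVec (d : ℕ) (j : Fin d) : Fin d → ℕ := fun i => if i = j then 1 else 0

/-- `Pre(v) = {v + e_j : v_j ≤ t_v} ∪ {v − e_j : v_j > t_v}`. -/
def Pre (n s : ℕ) {d : ℕ} (v : Fin d → ℕ) : Set (Fin d → ℕ) :=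
  {w | ∃ j, (v j ≤ tv n s v ∧ w = v + eVec d j) ∨ (tv n s v < v j ∧ w = v - eVec d j)}

/-- The potential function `h(v) - t_v²` over ℤ. -/
def Phi (n s : ℕ) {d : ℕ} (v : Fin d → ℕ) : ℤ :=
  (∑ i, (v i : ℤ) ^ 2) - ((∑ i, (v i : ℤ)) - ((s - 1) * n : ℕ)) ^ 2

lemma Fs_mem {n d s : ℕ} {v : Fin d → ℕ} (hv : v ∈ Fs n d s) :
    ∃ t, 1 ≤ t ∧ t ≤ n - 1 ∧ (∀ i, 1 ≤ v i ∧ v i ≤ n) ∧ (∑ i, v i) = (s - 1) * n + t := by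
  simp only [Fs, hyperplane, gridSet, Set.mem_iUnion, Set.mem_setOf_eq, Set.mem_sep_iff,
    Finset.mem_Icc] at hv
  obtain ⟨t, ⟨ht1, ht2⟩, hg, hs⟩ := hv
  exact ⟨t, ht1, ht2, hg, hs⟩

lemma step_lem (n d s : ℕ) (hn : 1 ≤ n) {v w : Fin d → ℕ}
    (hv : v ∈ Fs n d s) (hw : w ∈ Pre n s v) :
    (∀ i, 1 ≤ w i ∧ w i ≤ n) ∧
    ((s - 1) * n ≤ ∑ i, w i) ∧ (∑ i, w i ≤ (s - 1) * n + n) ∧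
    Phi n s w ≤ Phi n s v - 1 + ((∑ i, (w i : ℤ)) - ∑ i, (v i : ℤ)) := by
  obtain ⟨t, ht1, ht2, hg, hsum⟩ := Fs_mem hv
  have htv : tv n s v = t := by simp [tv, hsum]
  obtain ⟨j, hcase⟩ := hw
  have htn : t + 1 ≤ n := by omega
  have main : ∀ ε : ℤ, (ε = 1 ∨ ε = -1) →
      (∀ i, (w i : ℤ) = (v i : ℤ) + ε * (if i = j then 1 else 0)) →
      (ε = 1 → (v j : ℤ) ≤ t) → (ε = -1 → (t : ℤ) < (v j : ℤ)) →
      ((s - 1) * n ≤ ∑ i, w i) ∧ (∑ i, w i ≤ (s - 1) * n + n) ∧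
      Phi n s w ≤ Phi n s v - 1 + ((∑ i, (w i : ℤ)) - ∑ i, (v i : ℤ)) := by
    intro ε hε hwi hup hdn
    have hSZ : (∑ i, (w i : ℤ)) = (∑ i, (v i : ℤ)) + ε := by
      rw [Finset.sum_congr rfl (fun i _ => hwi i), Finset.sum_add_distrib]
      simp [mul_ite, mul_one, mul_zero, Finset.sum_ite_eq']
    have hε2 : ε ^ 2 = 1 := by rcases hε with h | h <;> rw [h] <;> ring
    have hHZ : (∑ i, (w i : ℤ) ^ 2) =
        (∑ i, (v i : ℤ) ^ 2) + 2 * ε * (v j : ℤ) + 1 := by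
      have h1 : ∀ i, (w i : ℤ) ^ 2 =
          (v i : ℤ) ^ 2 + (2 * ε * (v i : ℤ) + ε ^ 2) * (if i = j then 1 else 0) := by
        intro i
        rw [hwi i]
        by_cases h : i = j <;> simp [h] <;> ring
      rw [Finset.sum_congr rfl (fun i _ => h1 i), Finset.sum_add_distrib]
      simp only [mul_ite, mul_one, mul_zero, Finset.sum_ite_eq', Finset.mem_univ, if_true, hε2]
      ring
    have hvZ : (∑ i, (v i : ℤ)) = ((s - 1) * n : ℕ) + (t : ℤ) := by
      have h : ((∑ i, v i : ℕ) : ℤ) = (((s - 1) * n + t : ℕ) : ℤ) := by rw [hsum]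
      push_cast at h ⊢
      linarith
    have hεlo : (-1 : ℤ) ≤ ε := by rcases hε with h | h <;> rw [h] <;> norm_num
    have hεhi : ε ≤ 1 := by rcases hε with h | h <;> rw [h] <;> norm_num
    have htZ1 : (1 : ℤ) ≤ t := by exact_mod_cast ht1
    have htZ2 : (t : ℤ) + 1 ≤ n := by exact_mod_cast htn
    have hSw : ((∑ i, w i : ℕ) : ℤ) = ((s - 1) * n : ℕ) + (t : ℤ) + ε := by
      push_cast
      push_cast at hSZ hvZ
      linarith
    refine ⟨?_, ?_, ?_⟩
    · have h : (((s - 1) * n : ℕ) : ℤ) ≤ ((∑ i, w i : ℕ) : ℤ) := by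
        rw [hSw]; linarith
      exact_mod_cast h
    · have h : ((∑ i, w i : ℕ) : ℤ) ≤ (((s - 1) * n + n : ℕ) : ℤ) := by
        rw [hSw]; push_cast; linarith
      exact_mod_cast h
    · unfold Phi
      rw [hHZ, hSZ, hvZ]
      rcases hε with h | h
      · have hv₁ := hup h
        rw [h]
        ring_nf
        nlinarith [hv₁]
      · have hv₁ := hdn h
        rw [h]
        ring_nf
        nlinarith [hv₁]
  rcases hcase with ⟨hj, hwe⟩ | ⟨hj, hwe⟩
  · rw [htv] at hj
    have hwi : ∀ i, w i = v i + (if i = j then 1 else 0) := by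
      intro i; simp [hwe, eVec, Pi.add_apply]
    have hgrid : ∀ i, 1 ≤ w i ∧ w i ≤ n := by
      intro i
      rw [hwi i]
      by_cases h : i = j
      · rw [if_pos h]
        have h1 := (hg i).1
        have h2 : v i = v j := by rw [h]
        omega
      · rw [if_neg h]
        have := hg i
        omega
    refine ⟨hgrid, main 1 (Or.inl rfl) ?_ (fun _ => by exact_mod_cast hj) (by simp)⟩
    intro i
    rw [hwi i]
    by_cases h : i = j
    · rw [if_pos h, if_pos h]; push_cast; ring
    · rw [if_neg h, if_neg h]; push_cast; ring
  · rw [htv] at hj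
    have hvj1 : 1 ≤ v j := by omega
    have hwi : ∀ i, w i = v i - (if i = j then 1 else 0) := by
      intro i; simp [hwe, eVec, Pi.sub_apply]
    have hgrid : ∀ i, 1 ≤ w i ∧ w i ≤ n := by
      intro i
      rw [hwi i]
      by_cases h : i = j
      · rw [if_pos h]
        have h2 : v i = v j := by rw [h]
        have h3 := (hg i).2
        omega
      · rw [if_neg h]
        have := hg i
        omega
    refine ⟨hgrid, main (-1) (Or.inr rfl) ?_ (by simp) (fun _ => by exact_mod_cast hj)⟩
    intro i
    rw [hwi i]
    by_cases h : i = j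
    · rw [if_pos h, if_pos h]
      have h2 : v i = v j := by rw [h]
      have h4 : ((v i - 1 : ℕ) : ℤ) = (v i : ℤ) - 1 := by omega
      rw [h4]; ring
    · rw [if_neg h, if_neg h]; simp

set_option maxHeartbeats 1000000 in
theorem witness_tree_path_bound (n d s : ℕ) (hn : 1 ≤ n)
    (hs1 : 1 + (d + n - 1) / n ≤ s) (hs2 : s ≤ d)
    (m : ℕ) (hm : 1 ≤ m) (u : ℕ → (Fin d → ℕ))
    (h0 : u 0 ∈ Fs n d s)
    (hF : ∀ i, i + 1 < m → u i ∈ Fs n d s)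
    (hstep : ∀ i, i + 1 < m → u (i + 1) ∈ Pre n s (u i)) :
    m ≤ (d + 2) * n ^ 2 + n + 1 := by
  rcases le_or_gt m 1 with hm1 | hm1
  · nlinarith
  -- m ≥ 2
  -- telescoping: Phi (u k) ≤ Phi (u 0) - k + (S k - S 0) for k < m
  have key : ∀ k, k < m → Phi n s (u k) ≤ Phi n s (u 0) - k +
      ((∑ i, (u k i : ℤ)) - ∑ i, (u 0 i : ℤ)) := by
    intro k
    induction k with
    | zero => intro _; simp
    | succ k ih =>
      intro hk
      have hk' : k < m := by omega
      have hkm : k + 1 < m := hk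
      have hstepk := step_lem n d s hn (hF k hkm) (hstep k hkm)
      have := ih hk'
      have h3 := hstepk.2.2.2
      push_cast
      push_cast at this h3
      linarith
  set M := m - 1 with hM
  have hMm : M < m := by omega
  have hM1 : M - 1 + 1 = M := by omega
  have hlast := step_lem n d s hn (hF (M - 1) (by omega)) (by
    have := hstep (M - 1) (by omega)
    rwa [hM1] at this)
  obtain ⟨hgridM, hsumlo, hsumhi, _⟩ := hlast
  obtain ⟨t0, ht01, ht02, hg0, hsum0⟩ := Fs_mem h0
  -- bounds on Phi (u 0)
  have hS0 : ((∑ i, u 0 i : ℕ) : ℤ) = ((s - 1) * n : ℕ) + (t0 : ℤ) := by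
    have h : ((∑ i, u 0 i : ℕ) : ℤ) = (((s - 1) * n + t0 : ℕ) : ℤ) := by rw [hsum0]
    push_cast at h ⊢
    linarith
  have hPhi0 : Phi n s (u 0) ≤ d * n ^ 2 - 1 := by
    unfold Phi
    have h1 : (∑ i, (u 0 i : ℤ) ^ 2) ≤ ∑ _i : Fin d, (n : ℤ) ^ 2 := by
      apply Finset.sum_le_sum
      intro i _
      have := (hg0 i).2
      have h2 : (u 0 i : ℤ) ≤ n := by exact_mod_cast this
      have h3 : (0 : ℤ) ≤ u 0 i := by positivity
      nlinarith
    have h2 : (∑ _i : Fin d, (n : ℤ) ^ 2) = d * n ^ 2 := by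
      simp [Finset.sum_const, mul_comm]
    have h4 : (∑ i, (u 0 i : ℤ)) - ((s - 1) * n : ℕ) = t0 := by
      push_cast at hS0 ⊢; linarith
    rw [h4]
    have ht0Z : (1 : ℤ) ≤ t0 := by exact_mod_cast ht01
    nlinarith
  -- bounds on Phi (u M)
  have hPhiM : (d : ℤ) - n ^ 2 ≤ Phi n s (u M) := by
    unfold Phi
    have h1 : (d : ℤ) ≤ ∑ i, (u M i : ℤ) ^ 2 := by
      calc (d : ℤ) = ∑ _i : Fin d, (1 : ℤ) := by simp
        _ ≤ ∑ i, (u M i : ℤ) ^ 2 := by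
            apply Finset.sum_le_sum
            intro i _
            have := (hgridM i).1
            have h2 : (1 : ℤ) ≤ u M i := by exact_mod_cast this
            nlinarith
    have hlo : (((s - 1) * n : ℕ) : ℤ) ≤ ∑ i, (u M i : ℤ) := by
      exact_mod_cast hsumlo
    have hhi : (∑ i, (u M i : ℤ)) ≤ ((s - 1) * n : ℕ) + n := by
      have : ((∑ i, u M i : ℕ) : ℤ) ≤ (((s - 1) * n + n : ℕ) : ℤ) := by exact_mod_cast hsumhi
      push_cast at this ⊢; linarith
    nlinarith [sq_nonneg ((∑ i, (u M i : ℤ)) - ((s - 1) * n : ℕ))]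
  have hkey := key M hMm
  -- sum difference bound
  have hSdiff : (∑ i, (u M i : ℤ)) - (∑ i, (u 0 i : ℤ)) ≤ n - 1 := by
    have h1 : (∑ i, (u M i : ℤ)) ≤ ((s - 1) * n : ℕ) + n := by
      have : ((∑ i, u M i : ℕ) : ℤ) ≤ (((s - 1) * n + n : ℕ) : ℤ) := by exact_mod_cast hsumhi
      push_cast at this ⊢; linarith
    have h2 : ((s - 1) * n : ℕ) + 1 ≤ (∑ i, (u 0 i : ℤ)) := by
      push_cast at hS0 ⊢
      have : (1 : ℤ) ≤ t0 := by exact_mod_cast ht01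
      linarith
    linarith
  have hfin : (M : ℤ) ≤ (d : ℤ) * n ^ 2 + n ^ 2 + n - 2 := by linarith
  have : (m : ℤ) ≤ ((d : ℤ) + 2) * n ^ 2 + n + 1 := by
    have hmM : (m : ℤ) = M + 1 := by push_cast [hM]; omega
    have hn1 : (1 : ℤ) ≤ n := by exact_mod_cast hn
    nlinarith
  exact_mod_cast this
end

section
/- Let m(T_n^3) be the minimum size of a percolating set in 3-neighbour bootstrap percolation on the 3-dimensional discrete torus T_n^3 = (Z/nZ)^3. Then for all n ≥ 3, m(T_n^3) ≤ n^2 − 2n + 4. -/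
/-- Torus adjacency on `(ℤ/nℤ)^d`: differ by `±1 (mod n)` in exactly one coordinate. -/
def torusAdj {n d : ℕ} (u v : Fin d → ZMod n) : Prop :=
  ∃ j, (u j = v j + 1 ∨ v j = u j + 1) ∧ ∀ i, i ≠ j → u i = v i

/-- One round of `r`-neighbour bootstrap percolation on the torus. -/
def torusStep (n d r : ℕ) (S : Set (Fin d → ZMod n)) : Set (Fin d → ZMod n) :=
  S ∪ {v | r ≤ {u ∈ S | torusAdj u v}.ncard}

/-- `A` percolates the torus if every vertex is eventually infected. -/
def torusPercolates (n d r : ℕ) (A : Set (Fin d → ZMod n)) : Prop :=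
  ∀ v, v ∈ ⋃ t, (torusStep n d r)^[t] A


set_option linter.unusedSectionVars false

section
variable {n : ℕ} [NeZero n]

abbrev V (n : ℕ) := Fin 3 → ZMod n

def seedA (n : ℕ) : Set (V n) :=
  {v | v 0 = v 1 + v 2 ∧ v 1 ≠ 0 ∧ v 2 ≠ 0} ∪ {![1,1,0], ![1,0,1]}

def cl (n : ℕ) : Set (V n) := ⋃ t, (torusStep n 3 3)^[t] (seedA n)

lemma step_mono {S T : Set (V n)} (h : S ⊆ T) : torusStep n 3 3 S ⊆ torusStep n 3 3 T := by
  intro v hv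
  rcases hv with hv | hv
  · exact Or.inl (h hv)
  · refine Or.inr ?_
    refine le_trans hv (Set.ncard_le_ncard ?_ (Set.toFinite _))
    intro u hu; exact ⟨h hu.1, hu.2⟩

lemma subset_step (S : Set (V n)) : S ⊆ torusStep n 3 3 S := Set.subset_union_left

lemma iterate_mono {s t : ℕ} (h : s ≤ t) :
    (torusStep n 3 3)^[s] (seedA n) ⊆ (torusStep n 3 3)^[t] (seedA n) := by
  induction t with
  | zero => simp_all
  | succ t ih =>
    rcases Nat.lt_or_ge s (t+1) with hlt | hge
    · refine (ih (by omega)).trans ?_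
      rw [Function.iterate_succ_apply']
      exact subset_step _
    · have : s = t + 1 := by omega
      subst this; rfl

lemma seed_mem {v : V n} (h : v ∈ seedA n) : v ∈ cl n :=
  Set.mem_iUnion.2 ⟨0, h⟩

lemma cl_of_three {v u1 u2 u3 : V n} (h1 : u1 ∈ cl n) (h2 : u2 ∈ cl n) (h3 : u3 ∈ cl n)
    (a1 : torusAdj u1 v) (a2 : torusAdj u2 v) (a3 : torusAdj u3 v)
    (e12 : u1 ≠ u2) (e13 : u1 ≠ u3) (e23 : u2 ≠ u3) : v ∈ cl n := by
  rcases Set.mem_iUnion.1 h1 with ⟨t1, m1⟩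
  rcases Set.mem_iUnion.1 h2 with ⟨t2, m2⟩
  rcases Set.mem_iUnion.1 h3 with ⟨t3, m3⟩
  set T := max t1 (max t2 t3) with hT
  have h1T : t1 ≤ T := le_max_left _ _
  have h2T : t2 ≤ T := le_trans (le_max_left _ _) (le_max_right t1 _)
  have h3T : t3 ≤ T := le_trans (le_max_right _ _) (le_max_right t1 _)
  have m1' := iterate_mono h1T m1
  have m2' := iterate_mono h2T m2
  have m3' := iterate_mono h3T m3
  refine Set.mem_iUnion.2 ⟨T + 1, ?_⟩
  rw [Function.iterate_succ_apply']
  refine Or.inr ?_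
  have hsub : {u1, u2, u3} ⊆ {u ∈ (torusStep n 3 3)^[T] (seedA n) | torusAdj u v} := by
    intro u hu
    rcases hu with rfl | rfl | rfl
    · exact ⟨m1', a1⟩
    · exact ⟨m2', a2⟩
    · exact ⟨m3', a3⟩
  have : ({u1, u2, u3} : Set (V n)).ncard = 3 := by
    rw [Set.ncard_insert_of_notMem (by simp [e12, e13]) (Set.toFinite _),
        Set.ncard_insert_of_notMem (by simp [e23]) (Set.toFinite _), Set.ncard_singleton]
  calc (3:ℕ) = ({u1, u2, u3} : Set (V n)).ncard := this.symm
    _ ≤ _ := Set.ncard_le_ncard hsub (Set.toFinite _)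

end
-- helpers
section Helpers
variable {n : ℕ} [NeZero n]

lemma adjx (x y z : ZMod n) : torusAdj ![x+1,y,z] ![x,y,z] :=
  ⟨0, Or.inl (by simp), by intro i hi; fin_cases i <;> simp_all⟩

lemma adjx' (x y z : ZMod n) : torusAdj ![x-1,y,z] ![x,y,z] :=
  ⟨0, Or.inr (by simp), by intro i hi; fin_cases i <;> simp_all⟩

lemma adjy (x y z : ZMod n) : torusAdj ![x,y+1,z] ![x,y,z] :=
  ⟨1, Or.inl (by simp), by intro i hi; fin_cases i <;> simp_all⟩

lemma adjy' (x y z : ZMod n) : torusAdj ![x,y-1,z] ![x,y,z] :=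
  ⟨1, Or.inr (by simp), by intro i hi; fin_cases i <;> simp_all⟩

lemma adjz (x y z : ZMod n) : torusAdj ![x,y,z+1] ![x,y,z] :=
  ⟨2, Or.inl (by simp), by intro i hi; fin_cases i <;> simp_all⟩

lemma adjz' (x y z : ZMod n) : torusAdj ![x,y,z-1] ![x,y,z] :=
  ⟨2, Or.inr (by simp), by intro i hi; fin_cases i <;> simp_all⟩

lemma vne0 {a0 b0 a1 b1 a2 b2 : ZMod n} (h : a0 ≠ b0) :
    (![a0,a1,a2] : V n) ≠ ![b0,b1,b2] := by
  intro e; exact h (by have := congrFun e 0; simpa using this)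

lemma vne1 {a0 b0 a1 b1 a2 b2 : ZMod n} (h : a1 ≠ b1) :
    (![a0,a1,a2] : V n) ≠ ![b0,b1,b2] := by
  intro e; exact h (by have := congrFun e 1; simpa using this)

lemma vne2 {a0 b0 a1 b1 a2 b2 : ZMod n} (h : a2 ≠ b2) :
    (![a0,a1,a2] : V n) ≠ ![b0,b1,b2] := by
  intro e; exact h (by have := congrFun e 2; simpa using this)

end Helpers

section ZHelp
variable {n : ℕ}

lemma zcast_ne_zero (hn : 3 ≤ n) {a : ℕ} (h0 : 0 < a) (hlt : a < n) : (a : ZMod n) ≠ 0 := by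
  haveI : NeZero n := ⟨by omega⟩
  intro h
  rw [ZMod.natCast_eq_zero_iff] at h
  exact absurd (Nat.le_of_dvd h0 h) (by omega)

lemma zcast_ne (hn : 3 ≤ n) {a b : ℕ} (hab : a < b) (hlt : b - a < n) : (a : ZMod n) ≠ (b : ZMod n) := by
  intro h
  have hb : (b : ZMod n) = (a : ZMod n) + ((b - a : ℕ) : ZMod n) := by
    rw [← Nat.cast_add]; congr 1; omega
  rw [hb, left_eq_add] at h
  exact zcast_ne_zero hn (by omega) hlt h

lemma zadd_ne (hn : 3 ≤ n) (a : ZMod n) {c : ℕ} (h0 : 0 < c) (hlt : c < n) : a + (c:ℕ) ≠ a := by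
  intro h
  have : ((c:ℕ) : ZMod n) = 0 := by
    have := congrArg (fun t => t - a) h
    simpa [add_comm, add_sub_cancel_right] using this
  exact zcast_ne_zero hn h0 hlt this

lemma zone_ne (hn : 3 ≤ n) (a : ZMod n) : a + 1 ≠ a := by
  have := zadd_ne (n := n) hn a (c := 1) one_pos (by omega)
  simpa using this

lemma zsub_ne (hn : 3 ≤ n) (a : ZMod n) : a - 1 ≠ a := by
  intro h
  have : a = a + 1 := by
    have := congrArg (fun t => t + 1) h
    simpa using this.symm
  exact zone_ne hn a this.symm

lemma ztwo_ne (hn : 3 ≤ n) (a : ZMod n) : a + 1 ≠ a - 1 := by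
  intro h
  have h2 : a + 1 + 1 = a := by
    have := congrArg (fun t => t + 1) h
    simpa [sub_add_cancel] using this
  have : a + ((2:ℕ):ZMod n) = a := by push_cast; linear_combination h2
  exact zadd_ne hn a (by omega) (by omega) this

end ZHelp
section Mirror
variable {n : ℕ} [NeZero n]

def sw (v : V n) : V n := ![v 0, v 2, v 1]

lemma sw_apply (v : V n) (i : Fin 3) : sw v i = v (![0,2,1] i) := by
  fin_cases i <;> simp [sw]

lemma adj_sw {u v : V n} (h : torusAdj u v) : torusAdj (sw u) (sw v) := by
  rcases h with ⟨j, hj, ho⟩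
  refine ⟨![0,2,1] j, ?_, ?_⟩
  · have hmm : (![0,2,1] : Fin 3 → Fin 3) (![0,2,1] j) = j := by fin_cases j <;> simp
    rw [sw_apply, sw_apply, hmm]; exact hj
  · intro i hi
    rw [sw_apply, sw_apply]
    refine ho _ ?_
    intro he
    apply hi
    have : (![0,2,1] : Fin 3 → Fin 3) (![0,2,1] i) = ![0,2,1] j := by rw [he]
    have hmm : ∀ k : Fin 3, (![0,2,1] : Fin 3 → Fin 3) (![0,2,1] k) = k := by
      intro k; fin_cases k <;> simp
    rwa [hmm] at this

lemma sw_seed : sw '' (seedA n) ⊆ seedA n := by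
  rintro _ ⟨v, hv, rfl⟩
  rcases hv with ⟨h0, h1, h2⟩ | hv
  · exact Or.inl ⟨by simp [sw]; rw [h0]; ring, by simpa [sw] using h2, by simpa [sw] using h1⟩
  · rcases hv with rfl | rfl
    · right; right; ext i; fin_cases i <;> simp [sw]
    · right; left; ext i; fin_cases i <;> simp [sw]

lemma sw_step {S : Set (V n)} : sw '' (torusStep n 3 3 S) ⊆ torusStep n 3 3 (sw '' S) := by
  rintro _ ⟨v, hv, rfl⟩
  rcases hv with hv | hv
  · exact Or.inl ⟨v, hv, rfl⟩
  · refine Or.inr ?_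
    have hinj : Function.Injective (sw : V n → V n) := by
      intro a b hab
      ext i
      have h0 := congrFun hab 0
      have h1 := congrFun hab 1
      have h2 := congrFun hab 2
      simp [sw] at h0 h1 h2
      fin_cases i <;> assumption
    calc (3:ℕ) ≤ {u ∈ S | torusAdj u v}.ncard := hv
      _ = (sw '' {u ∈ S | torusAdj u v}).ncard := (Set.ncard_image_of_injective _ hinj).symm
      _ ≤ {u ∈ sw '' S | torusAdj u (sw v)}.ncard := by
          refine Set.ncard_le_ncard ?_ (Set.toFinite _)
          rintro _ ⟨u, ⟨hu, ha⟩, rfl⟩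
          exact ⟨⟨u, hu, rfl⟩, adj_sw ha⟩

lemma sw_cl {v : V n} (h : v ∈ cl n) : sw v ∈ cl n := by
  rcases Set.mem_iUnion.1 h with ⟨t, ht⟩
  refine Set.mem_iUnion.2 ⟨t, ?_⟩
  have key : ∀ t, sw '' ((torusStep n 3 3)^[t] (seedA n)) ⊆ (torusStep n 3 3)^[t] (seedA n) := by
    intro t
    induction t with
    | zero => simpa using sw_seed
    | succ t ih =>
      simp only [Function.iterate_succ_apply']
      exact le_trans sw_step (step_mono ih)
  exact key t ⟨v, ht, rfl⟩

lemma sw_cl' {x y z : ZMod n} (h : (![x,y,z] : V n) ∈ cl n) : (![x,z,y] : V n) ∈ cl n := by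
  have := sw_cl h
  have he : sw (![x,y,z] : V n) = ![x,z,y] := by ext i; fin_cases i <;> simp [sw]
  rwa [he] at this

end Mirror
section Regions
variable {n : ℕ}

lemma seedP (hn : 3 ≤ n) {Y Z : ℕ} (hY1 : 1 ≤ Y) (hYn : Y ≤ n-1) (hZ1 : 1 ≤ Z) (hZn : Z ≤ n-1) :
    haveI : NeZero n := ⟨by omega⟩
    (![(↑(Y+Z) : ZMod n), ↑Y, ↑Z] : V n) ∈ cl n := by
  haveI : NeZero n := ⟨by omega⟩
  refine seed_mem (Or.inl ⟨?_, ?_, ?_⟩)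
  · show ((Y+Z : ℕ) : ZMod n) = ↑Y + ↑Z; push_cast; ring
  · exact zcast_ne_zero hn hY1 (by omega)
  · exact zcast_ne_zero hn hZ1 (by omega)

lemma memS1 (hn : 3 ≤ n) :
    haveI : NeZero n := ⟨by omega⟩
    (![(1 : ZMod n), 1, 1] : V n) ∈ cl n := by
  haveI : NeZero n := ⟨by omega⟩
  refine cl_of_three (u1 := ![2,1,1]) (u2 := ![1,0,1]) (u3 := ![1,1,0]) ?_ ?_ ?_ ?_ ?_ ?_ ?_ ?_ ?_
  · refine seed_mem (Or.inl ⟨by show (2 : ZMod n) = 1 + 1; norm_num, ?_, ?_⟩) <;>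
      simpa using zcast_ne_zero hn (a := 1) (by omega) (by omega)
  · exact seed_mem (Or.inr (Or.inr rfl))
  · exact seed_mem (Or.inr (Or.inl rfl))
  · have e : (2 : ZMod n) = 1 + 1 := by norm_num
    rw [e]; exact adjx 1 1 1
  · have e : (0 : ZMod n) = 1 - 1 := by norm_num
    rw [e]; exact adjy' 1 1 1
  · have e : (0 : ZMod n) = 1 - 1 := by norm_num
    rw [e]; exact adjz' 1 1 1
  · refine vne1 ?_; simpa using zcast_ne_zero hn (a := 1) (by omega) (by omega)
  · refine vne2 ?_; simpa using zcast_ne_zero hn (a := 1) (by omega) (by omega)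
  · refine vne1 ?_; exact fun h => (zcast_ne_zero hn (a := 1) (by omega) (by omega)) (by simpa using h.symm)

lemma memF (hn : 3 ≤ n) : ∀ K Y Z : ℕ, 1 ≤ Y → Y + K ≤ n-1 → 1 ≤ Z → Z + K ≤ n-1 →
    haveI : NeZero n := ⟨by omega⟩
    (![(↑(K+Y+Z) : ZMod n), ↑Y, ↑Z] : V n) ∈ cl n := by
  haveI : NeZero n := ⟨by omega⟩
  intro K
  induction K with
  | zero =>
    intro Y Z hY1 hYn hZ1 hZn
    simpa using seedP hn hY1 (by omega) hZ1 (by omega)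
  | succ K ih =>
    intro Y Z hY1 hYn hZ1 hZn
    have h1 : (![(↑(K+Y+Z) : ZMod n), ↑Y, ↑Z] : V n) ∈ cl n :=
      ih Y Z hY1 (by omega) hZ1 (by omega)
    have h2 : (![(↑(K+1+Y+Z) : ZMod n), ↑(Y+1), ↑Z] : V n) ∈ cl n := by
      have := ih (Y+1) Z (by omega) (by omega) hZ1 (by omega)
      have hnat : K+(Y+1)+Z = K+1+Y+Z := by ring
      rwa [hnat] at this
    have h3 : (![(↑(K+1+Y+Z) : ZMod n), ↑Y, ↑(Z+1)] : V n) ∈ cl n := by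
      have := ih Y (Z+1) hY1 (by omega) (by omega) (by omega)
      have hnat : K+Y+(Z+1) = K+1+Y+Z := by ring
      rwa [hnat] at this
    refine cl_of_three h1 h2 h3 ?_ ?_ ?_ ?_ ?_ ?_
    · have e : ((K+Y+Z : ℕ) : ZMod n) = ((K+1+Y+Z : ℕ) : ZMod n) - 1 := by push_cast; ring
      rw [e]; exact adjx' _ _ _
    · have e : ((Y+1 : ℕ) : ZMod n) = (Y : ℕ) + 1 := by push_cast; ring
      rw [e]; exact adjy _ _ _
    · have e : ((Z+1 : ℕ) : ZMod n) = (Z : ℕ) + 1 := by push_cast; ring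
      rw [e]; exact adjz _ _ _
    · exact vne1 (zcast_ne hn (by omega) (by omega))
    · exact vne2 (zcast_ne hn (by omega) (by omega))
    · exact vne1 (fun h => (zcast_ne hn (a := Y) (b := Y+1) (by omega) (by omega)) h.symm)

end Regions
section Regions2
variable {n : ℕ}

lemma cast_succ (a : ℕ) : ((a+1 : ℕ) : ZMod n) = (a : ZMod n) + 1 := by push_cast; ring

lemma cast_pred {a : ℕ} (h : 1 ≤ a) : ((a-1 : ℕ) : ZMod n) = (a : ZMod n) - 1 := by
  have h1 : a - 1 + 1 = a := by omega
  calc ((a-1 : ℕ) : ZMod n) = ((a-1)+1 : ℕ) - 1 := by push_cast; ring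
    _ = (a : ZMod n) - 1 := by rw [h1]

lemma cast_addn (a : ℕ) : ((a + n : ℕ) : ZMod n) = (a : ZMod n) := by
  push_cast [ZMod.natCast_self]; ring

lemma memBc (hn : 3 ≤ n) : ∀ K W Y Z : ℕ, K+1 ≤ Y → Y ≤ n-1 → K+1 ≤ Z → Z ≤ n-1 →
    W + K = Y + Z →
    haveI : NeZero n := ⟨by omega⟩
    (![(↑W : ZMod n), ↑Y, ↑Z] : V n) ∈ cl n := by
  haveI : NeZero n := ⟨by omega⟩
  intro K
  induction K with
  | zero =>
    intro W Y Z hY1 hYn hZ1 hZn hW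
    have hw : W = Y + Z := by omega
    subst hw
    simpa using seedP hn hY1 (by omega) hZ1 (by omega)
  | succ K ih =>
    intro W Y Z hY1 hYn hZ1 hZn hW
    have h1 : (![(↑(W+1) : ZMod n), ↑Y, ↑Z] : V n) ∈ cl n :=
      ih (W+1) Y Z (by omega) hYn (by omega) hZn (by omega)
    have h2 : (![(↑W : ZMod n), ↑(Y-1), ↑Z] : V n) ∈ cl n :=
      ih W (Y-1) Z (by omega) (by omega) (by omega) hZn (by omega)
    have h3 : (![(↑W : ZMod n), ↑Y, ↑(Z-1)] : V n) ∈ cl n :=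
      ih W Y (Z-1) (by omega) hYn (by omega) (by omega) (by omega)
    refine cl_of_three h1 h2 h3 ?_ ?_ ?_ ?_ ?_ ?_
    · rw [cast_succ]; exact adjx _ _ _
    · rw [cast_pred (by omega : 1 ≤ Y)]; exact adjy' _ _ _
    · rw [cast_pred (by omega : 1 ≤ Z)]; exact adjz' _ _ _
    · exact vne1 fun h => (zcast_ne hn (a := Y-1) (b := Y) (by omega) (by omega)) h.symm
    · exact vne2 fun h => (zcast_ne hn (a := Z-1) (b := Z) (by omega) (by omega)) h.symm
    · exact vne1 (zcast_ne hn (a := Y-1) (b := Y) (by omega) (by omega))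

end Regions2
section Regions3
variable {n : ℕ} [NeZero n]

lemma adjxE {x y z x' : ZMod n} (h : x' = x + 1) : torusAdj ![x',y,z] ![x,y,z] := by
  rw [h]; exact adjx _ _ _
lemma adjxE' {x y z x' : ZMod n} (h : x' = x - 1) : torusAdj ![x',y,z] ![x,y,z] := by
  rw [h]; exact adjx' _ _ _
lemma adjyE {x y z y' : ZMod n} (h : y' = y + 1) : torusAdj ![x,y',z] ![x,y,z] := by
  rw [h]; exact adjy _ _ _
lemma adjyE' {x y z y' : ZMod n} (h : y' = y - 1) : torusAdj ![x,y',z] ![x,y,z] := by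
  rw [h]; exact adjy' _ _ _
lemma adjzE {x y z z' : ZMod n} (h : z' = z + 1) : torusAdj ![x,y,z'] ![x,y,z] := by
  rw [h]; exact adjz _ _ _
lemma adjzE' {x y z z' : ZMod n} (h : z' = z - 1) : torusAdj ![x,y,z'] ![x,y,z] := by
  rw [h]; exact adjz' _ _ _

end Regions3

section Regions4
variable {n : ℕ}

lemma memDiag (hn : 3 ≤ n) : ∀ s : ℕ, 1 ≤ s → s ≤ n-1 →
    haveI : NeZero n := ⟨by omega⟩
    (![(↑s : ZMod n), ↑s, ↑s] : V n) ∈ cl n := by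
  haveI : NeZero n := ⟨by omega⟩
  intro s
  induction s using Nat.strong_induction_on with
  | _ s IH =>
    intro hs1 hsn
    rcases Nat.lt_or_ge s 2 with hlt | hge
    · have : s = 1 := by omega
      subst this
      simpa using memS1 hn
    obtain ⟨t', rfl⟩ : ∃ t', s = t' + 1 := ⟨s-1, by omega⟩
    have ht1 : 1 ≤ t' := by omega
    have htn : t' + 1 ≤ n-1 := hsn
    have hD : (![(↑t' : ZMod n), ↑t', ↑t'] : V n) ∈ cl n := IH t' (by omega) (by omega) (by omega)
    -- chain A : Pa'(t', t'+d)
    have hPa' : ∀ d : ℕ, t' + d + 1 ≤ n-1 →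
        (![(↑t' : ZMod n), ↑t', ↑(t'+d+1)] : V n) ∈ cl n := by
      intro d
      induction d with
      | zero =>
        intro hdn
        have hu1 : (![(↑(t'-1) : ZMod n), ↑t', ↑(t'+1)] : V n) ∈ cl n := by
          have := memF hn (n-1-(t'+1)) t' (t'+1) (by omega) (by omega) (by omega) (by omega)
          rwa [show n-1-(t'+1)+t'+(t'+1) = (t'-1)+n by omega, cast_addn] at this
        have hu2 : (![(↑t' : ZMod n), ↑(t'+1), ↑(t'+1)] : V n) ∈ cl n := by
          have := memF hn (n-1-(t'+1)) (t'+1) (t'+1) (by omega) (by omega) (by omega) (by omega)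
          rwa [show n-1-(t'+1)+(t'+1)+(t'+1) = t'+n by omega, cast_addn] at this
        refine cl_of_three hu1 hu2 hD ?_ ?_ ?_ ?_ ?_ ?_
        · exact adjxE' (cast_pred ht1)
        · exact adjyE (cast_succ t')
        · exact adjzE' (by rw [show t' = (t'+1)-1 by omega] ; exact cast_pred (by omega))
        · exact vne1 (zcast_ne hn (a := t') (b := t'+1) (by omega) (by omega))
        · exact vne2 (zcast_ne hn (a := t') (b := t'+1) (by omega) (by omega)).symm
        · exact vne1 (zcast_ne hn (a := t') (b := t'+1) (by omega) (by omega)).symm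
      | succ d ihd =>
        intro hdn
        have hu1 : (![(↑(t'-1) : ZMod n), ↑t', ↑(t'+d+2)] : V n) ∈ cl n := by
          have := memF hn (n-1-(t'+d+2)) t' (t'+d+2) (by omega) (by omega) (by omega) (by omega)
          rwa [show n-1-(t'+d+2)+t'+(t'+d+2) = (t'-1)+n by omega, cast_addn] at this
        have hu2 : (![(↑t' : ZMod n), ↑(t'+1), ↑(t'+d+2)] : V n) ∈ cl n := by
          have := memF hn (n-1-(t'+d+2)) (t'+1) (t'+d+2) (by omega) (by omega) (by omega) (by omega)
          rwa [show n-1-(t'+d+2)+(t'+1)+(t'+d+2) = t'+n by omega, cast_addn] at this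
        have hu3 : (![(↑t' : ZMod n), ↑t', ↑(t'+d+1)] : V n) ∈ cl n := ihd (by omega)
        refine cl_of_three hu1 hu2 hu3 ?_ ?_ ?_ ?_ ?_ ?_
        · exact adjxE' (cast_pred ht1)
        · exact adjyE (cast_succ t')
        · exact adjzE' (by rw [show t'+d+1 = (t'+d+2)-1 by omega]; exact cast_pred (by omega))
        · exact vne1 (zcast_ne hn (a := t') (b := t'+1) (by omega) (by omega))
        · exact vne2 (zcast_ne hn (a := t'+d+1) (b := t'+d+2) (by omega) (by omega)).symm
        · exact vne1 (zcast_ne hn (a := t') (b := t'+1) (by omega) (by omega)).symm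
    -- chain B : Pd(t'-j, t'+1)
    have hPd : ∀ j : ℕ, j ≤ t'-1 →
        (![(↑(t'+1) : ZMod n), ↑(t'-j), ↑(t'+1)] : V n) ∈ cl n := by
      intro j
      induction j with
      | zero =>
        intro _
        simp only [Nat.sub_zero]
        have hu1 : (![(↑(t'+2) : ZMod n), ↑t', ↑(t'+1)] : V n) ∈ cl n :=
          memBc hn (t'-1) (t'+2) t' (t'+1) (by omega) (by omega) (by omega) (by omega) (by omega)
        have hu2 : (![(↑(t'+1) : ZMod n), ↑t', ↑t'] : V n) ∈ cl n :=
          memBc hn (t'-1) (t'+1) t' t' (by omega) (by omega) (by omega) (by omega) (by omega)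
        have hu3 : (![(↑t' : ZMod n), ↑t', ↑(t'+1)] : V n) ∈ cl n := hPa' 0 (by omega)
        refine cl_of_three hu1 hu2 hu3 ?_ ?_ ?_ ?_ ?_ ?_
        · exact adjxE (by push_cast; ring)
        · exact adjzE' (by push_cast; ring)
        · exact adjxE' (by push_cast; ring)
        · exact vne0 (zcast_ne hn (a := t'+1) (b := t'+2) (by omega) (by omega)).symm
        · exact vne0 (zcast_ne hn (a := t') (b := t'+2) (by omega) (by omega)).symm
        · exact vne0 (zcast_ne hn (a := t') (b := t'+1) (by omega) (by omega)).symm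
      | succ j ihj =>
        intro hj
        have hy1 : 1 ≤ t'-(j+1) := by omega
        have hu1 : (![(↑(t'+2) : ZMod n), ↑(t'-(j+1)), ↑(t'+1)] : V n) ∈ cl n :=
          memBc hn (t'-(j+1)-1) (t'+2) (t'-(j+1)) (t'+1) (by omega) (by omega) (by omega)
            (by omega) (by omega)
        have hu2 : (![(↑(t'+1) : ZMod n), ↑(t'-(j+1)), ↑t'] : V n) ∈ cl n :=
          memBc hn (t'-(j+1)-1) (t'+1) (t'-(j+1)) t' (by omega) (by omega) (by omega)
            (by omega) (by omega)
        have hu3 : (![(↑(t'+1) : ZMod n), ↑(t'-(j+1)+1), ↑(t'+1)] : V n) ∈ cl n := by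
          have := ihj (by omega)
          rwa [show t'-j = t'-(j+1)+1 by omega] at this
        refine cl_of_three hu1 hu2 hu3 ?_ ?_ ?_ ?_ ?_ ?_
        · exact adjxE (by push_cast; ring)
        · exact adjzE' (by push_cast; ring)
        · exact adjyE (cast_succ _)
        · exact vne0 (zcast_ne hn (a := t'+1) (b := t'+2) (by omega) (by omega)).symm
        · exact vne0 (zcast_ne hn (a := t'+1) (b := t'+2) (by omega) (by omega)).symm
        · exact vne1 (zcast_ne hn (a := t'-(j+1)) (b := t'-(j+1)+1) (by omega) (by omega))
    -- conclude diag(t'+1)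
    have hu1 : (![(↑t' : ZMod n), ↑(t'+1), ↑(t'+1)] : V n) ∈ cl n := by
      have := memF hn (n-2-t') (t'+1) (t'+1) (by omega) (by omega) (by omega) (by omega)
      rwa [show n-2-t'+(t'+1)+(t'+1) = t'+n by omega, cast_addn] at this
    have hu2 : (![(↑(t'+2) : ZMod n), ↑(t'+1), ↑(t'+1)] : V n) ∈ cl n :=
      memBc hn t' (t'+2) (t'+1) (t'+1) (by omega) (by omega) (by omega) (by omega) (by omega)
    have hu3 : (![(↑(t'+1) : ZMod n), ↑t', ↑(t'+1)] : V n) ∈ cl n := by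
      have := hPd 0 (by omega)
      simpa using this
    refine cl_of_three hu1 hu2 hu3 ?_ ?_ ?_ ?_ ?_ ?_
    · exact adjxE' (by push_cast; ring)
    · exact adjxE (by push_cast; ring)
    · exact adjyE' (by push_cast; ring)
    · exact vne0 (zcast_ne hn (a := t') (b := t'+2) (by omega) (by omega))
    · exact vne1 fun h => (zcast_ne hn (a := t') (b := t'+1) (by omega) (by omega)) h.symm
    · exact vne1 (zcast_ne hn (a := t') (b := t'+1) (by omega) (by omega)).symm
end Regions4
section Regions5
variable {n : ℕ}

/-- Pa' cells (a,a,z), 1 ≤ a < z ≤ n-1 -/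
lemma memPa' (hn : 3 ≤ n) : ∀ a d : ℕ, 1 ≤ a → a + d + 1 ≤ n-1 →
    haveI : NeZero n := ⟨by omega⟩
    (![(↑a : ZMod n), ↑a, ↑(a+d+1)] : V n) ∈ cl n := by
  haveI : NeZero n := ⟨by omega⟩
  intro a d
  induction d with
  | zero =>
    intro ha1 hdn
    have hu1 : (![(↑(a-1) : ZMod n), ↑a, ↑(a+1)] : V n) ∈ cl n := by
      have := memF hn (n-1-(a+1)) a (a+1) (by omega) (by omega) (by omega) (by omega)
      rwa [show n-1-(a+1)+a+(a+1) = (a-1)+n by omega, cast_addn] at this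
    have hu2 : (![(↑a : ZMod n), ↑(a+1), ↑(a+1)] : V n) ∈ cl n := by
      have := memF hn (n-1-(a+1)) (a+1) (a+1) (by omega) (by omega) (by omega) (by omega)
      rwa [show n-1-(a+1)+(a+1)+(a+1) = a+n by omega, cast_addn] at this
    have hu3 : (![(↑a : ZMod n), ↑a, ↑a] : V n) ∈ cl n := memDiag hn a (by omega) (by omega)
    refine cl_of_three hu1 hu2 hu3 ?_ ?_ ?_ ?_ ?_ ?_
    · exact adjxE' (cast_pred ha1)
    · exact adjyE (cast_succ a)
    · exact adjzE' (by rw [show a = (a+1)-1 by omega]; exact cast_pred (by omega))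
    · exact vne1 (zcast_ne hn (a := a) (b := a+1) (by omega) (by omega))
    · exact vne2 (zcast_ne hn (a := a) (b := a+1) (by omega) (by omega)).symm
    · exact vne1 (zcast_ne hn (a := a) (b := a+1) (by omega) (by omega)).symm
  | succ d ihd =>
    intro ha1 hdn
    have hu1 : (![(↑(a-1) : ZMod n), ↑a, ↑(a+d+2)] : V n) ∈ cl n := by
      have := memF hn (n-1-(a+d+2)) a (a+d+2) (by omega) (by omega) (by omega) (by omega)
      rwa [show n-1-(a+d+2)+a+(a+d+2) = (a-1)+n by omega, cast_addn] at this
    have hu2 : (![(↑a : ZMod n), ↑(a+1), ↑(a+d+2)] : V n) ∈ cl n := by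
      have := memF hn (n-1-(a+d+2)) (a+1) (a+d+2) (by omega) (by omega) (by omega) (by omega)
      rwa [show n-1-(a+d+2)+(a+1)+(a+d+2) = a+n by omega, cast_addn] at this
    have hu3 : (![(↑a : ZMod n), ↑a, ↑(a+d+1)] : V n) ∈ cl n := ihd ha1 (by omega)
    refine cl_of_three hu1 hu2 hu3 ?_ ?_ ?_ ?_ ?_ ?_
    · exact adjxE' (cast_pred ha1)
    · exact adjyE (cast_succ a)
    · exact adjzE' (by rw [show a+d+1 = (a+d+2)-1 by omega]; exact cast_pred (by omega))
    · exact vne1 (zcast_ne hn (a := a) (b := a+1) (by omega) (by omega))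
    · exact vne2 (zcast_ne hn (a := a+d+1) (b := a+d+2) (by omega) (by omega)).symm
    · exact vne1 (zcast_ne hn (a := a) (b := a+1) (by omega) (by omega)).symm

/-- Pd cells (z,y,z), 1 ≤ y < z ≤ n-1 ; y = z-1-j -/
lemma memPd (hn : 3 ≤ n) : ∀ z j : ℕ, j + 2 ≤ z → z ≤ n-1 →
    haveI : NeZero n := ⟨by omega⟩
    (![(↑z : ZMod n), ↑(z-1-j), ↑z] : V n) ∈ cl n := by
  haveI : NeZero n := ⟨by omega⟩
  intro z j
  induction j with
  | zero =>
    intro hz2 hzn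
    simp only [Nat.sub_zero]
    have hu1 : (![(↑(z+1) : ZMod n), ↑(z-1), ↑z] : V n) ∈ cl n :=
      memBc hn (z-2) (z+1) (z-1) z (by omega) (by omega) (by omega) (by omega) (by omega)
    have hu2 : (![(↑z : ZMod n), ↑(z-1), ↑(z-1)] : V n) ∈ cl n :=
      memBc hn (z-2) z (z-1) (z-1) (by omega) (by omega) (by omega) (by omega) (by omega)
    have hu3 : (![(↑(z-1) : ZMod n), ↑(z-1), ↑z] : V n) ∈ cl n := by
      have := memPa' hn (z-1) 0 (by omega) (by omega)
      rwa [show z-1+0+1 = z by omega] at this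
    refine cl_of_three hu1 hu2 hu3 ?_ ?_ ?_ ?_ ?_ ?_
    · exact adjxE (cast_succ z)
    · exact adjzE' (cast_pred (by omega))
    · exact adjxE' (cast_pred (by omega))
    · exact vne0 (zcast_ne hn (a := z) (b := z+1) (by omega) (by omega)).symm
    · exact vne0 (zcast_ne hn (a := z-1) (b := z+1) (by omega) (by omega)).symm
    · exact vne0 (zcast_ne hn (a := z-1) (b := z) (by omega) (by omega)).symm
  | succ j ihj =>
    intro hz2 hzn
    have hy1 : 1 ≤ z-1-(j+1) := by omega
    have hu1 : (![(↑(z+1) : ZMod n), ↑(z-1-(j+1)), ↑z] : V n) ∈ cl n :=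
      memBc hn (z-1-(j+1)-1) (z+1) (z-1-(j+1)) z (by omega) (by omega) (by omega) (by omega)
        (by omega)
    have hu2 : (![(↑z : ZMod n), ↑(z-1-(j+1)), ↑(z-1)] : V n) ∈ cl n :=
      memBc hn (z-1-(j+1)-1) z (z-1-(j+1)) (z-1) (by omega) (by omega) (by omega) (by omega)
        (by omega)
    have hu3 : (![(↑z : ZMod n), ↑(z-1-(j+1)+1), ↑z] : V n) ∈ cl n := by
      have := ihj (by omega) hzn
      rwa [show z-1-j = z-1-(j+1)+1 by omega] at this
    refine cl_of_three hu1 hu2 hu3 ?_ ?_ ?_ ?_ ?_ ?_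
    · exact adjxE (cast_succ z)
    · exact adjzE' (cast_pred (by omega))
    · exact adjyE (cast_succ _)
    · exact vne0 (zcast_ne hn (a := z) (b := z+1) (by omega) (by omega)).symm
    · exact vne0 (zcast_ne hn (a := z) (b := z+1) (by omega) (by omega)).symm
    · exact vne1 (zcast_ne hn (a := z-1-(j+1)) (b := z-1-(j+1)+1) (by omega) (by omega))

/-- convenient wrappers -/
lemma memPa'' (hn : 3 ≤ n) {a z : ℕ} (ha : 1 ≤ a) (haz : a < z) (hz : z ≤ n-1) :
    haveI : NeZero n := ⟨by omega⟩
    (![(↑a : ZMod n), ↑a, ↑z] : V n) ∈ cl n := by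
  have := memPa' hn a (z-a-1) ha (by omega)
  rwa [show a+(z-a-1)+1 = z by omega] at this

lemma memPd'' (hn : 3 ≤ n) {y z : ℕ} (hy : 1 ≤ y) (hyz : y < z) (hz : z ≤ n-1) :
    haveI : NeZero n := ⟨by omega⟩
    (![(↑z : ZMod n), ↑y, ↑z] : V n) ∈ cl n := by
  have := memPd hn z (z-1-y) (by omega) hz
  rwa [show z-1-(z-1-y) = y by omega] at this

end Regions5
section Regions6
variable {n : ℕ}

lemma memU (hn : 3 ≤ n) : ∀ S T K Y Z : ℕ,
    Z + K = n+1+S → K+Y+T = n-1 → 1 ≤ Y → 1 ≤ Z → Z ≤ n-1 →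
    haveI : NeZero n := ⟨by omega⟩
    (![(↑(K+Y+Z) : ZMod n), ↑Y, ↑Z] : V n) ∈ cl n := by
  haveI : NeZero n := ⟨by omega⟩
  intro S
  induction S using Nat.strong_induction_on with
  | _ S IHS =>
  intro T
  induction T using Nat.strong_induction_on with
  | _ T IHT =>
  intro K Y Z hS hT hY1 hZ1 hZn
  have hK2 : 2 ≤ K := by omega
  have hZ2 : 2 ≤ Z := by omega
  have hKY : K + Y ≤ n-1 := by omega
  -- u1 : (K-1, Y, Z)
  have hu1 : (![(↑(K-1+Y+Z) : ZMod n), ↑Y, ↑Z] : V n) ∈ cl n := by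
    rcases Nat.eq_zero_or_pos S with hS0 | hSpos
    · -- Z+K = n+1 : neighbour on plane B=0
      have e : ((K-1+Y+Z : ℕ) : ZMod n) = ↑Y := by
        rw [show K-1+Y+Z = Y+n by omega]; exact cast_addn Y
      rw [e]
      rcases lt_trichotomy Y Z with h | h | h
      · exact memPa'' hn hY1 h hZn
      · subst h; exact memDiag hn Y hY1 (by omega)
      · have := memPd'' hn (y := Z) (z := Y) hZ1 h (by omega)
        exact sw_cl' this
    · exact IHS (S-1) (by omega) (T+1) (K-1) Y Z (by omega) (by omega) hY1 hZ1 hZn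
  -- u2 : (K-1, Y+1, Z)
  have hu2 : (![(↑(K+Y+Z) : ZMod n), ↑(Y+1), ↑Z] : V n) ∈ cl n := by
    have hY1n : Y+1 ≤ n-2 := by omega
    rcases Nat.eq_zero_or_pos S with hS0 | hSpos
    · have e : ((K+Y+Z : ℕ) : ZMod n) = ↑(Y+1) := by
        rw [show K+Y+Z = (Y+1)+n by omega]; exact cast_addn (Y+1)
      rw [e]
      rcases lt_trichotomy (Y+1) Z with h | h | h
      · exact memPa'' hn (by omega) h hZn
      · rw [← h]; exact memDiag hn (Y+1) (by omega) (by omega)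
      · have := memPd'' hn (y := Z) (z := Y+1) hZ1 h (by omega)
        exact sw_cl' this
    · have := IHS (S-1) (by omega) T (K-1) (Y+1) Z (by omega) (by omega) (by omega) hZ1 hZn
      rwa [show K-1+(Y+1)+Z = K+Y+Z by omega] at this
  -- u3 : (K+1, Y, Z-1)
  have hu3 : (![(↑(K+Y+Z) : ZMod n), ↑Y, ↑(Z-1)] : V n) ∈ cl n := by
    rcases Nat.eq_zero_or_pos T with hT0 | hTpos
    · -- K+1+Y = n : neighbour on plane C=0
      have e : ((K+Y+Z : ℕ) : ZMod n) = ↑(Z-1) := by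
        rw [show K+Y+Z = (Z-1)+n by omega]; exact cast_addn (Z-1)
      rw [e]
      rcases lt_trichotomy Y (Z-1) with h | h | h
      · exact memPd'' hn hY1 h (by omega)
      · rw [h]; exact memDiag hn (Z-1) (by omega) (by omega)
      · have := memPa'' hn (a := Z-1) (z := Y) (by omega) h (by omega)
        exact sw_cl' this
    · have := IHT (T-1) (by omega) (K+1) Y (Z-1) (by omega) (by omega) hY1 (by omega) (by omega)
      rwa [show K+1+Y+(Z-1) = K+Y+Z by omega] at this
  refine cl_of_three hu1 hu2 hu3 ?_ ?_ ?_ ?_ ?_ ?_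
  · refine adjxE' ?_
    rw [show K+Y+Z = (K-1+Y+Z)+1 by omega, cast_succ]; ring
  · exact adjyE (cast_succ Y)
  · exact adjzE' (cast_pred (by omega))
  · exact vne1 (zcast_ne hn (a := Y) (b := Y+1) (by omega) (by omega))
  · exact vne2 (zcast_ne hn (a := Z-1) (b := Z) (by omega) (by omega)).symm
  · exact vne1 (zcast_ne hn (a := Y) (b := Y+1) (by omega) (by omega)).symm
end Regions6
section Dispatch
variable {n : ℕ}

lemma memInterior (hn : 3 ≤ n) (v : V n) (h1 : v 1 ≠ 0) (h2 : v 2 ≠ 0) : v ∈ cl n := by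
  haveI : NeZero n := ⟨by omega⟩
  set Y := (v 1).val with hYdef
  set Z := (v 2).val with hZdef
  set K := (v 0 - v 1 - v 2).val with hKdef
  have hYlt : Y < n := ZMod.val_lt _
  have hZlt : Z < n := ZMod.val_lt _
  have hKlt : K < n := ZMod.val_lt _
  have hY1 : 1 ≤ Y := by
    rcases Nat.eq_zero_or_pos Y with h | h
    · exact absurd ((ZMod.val_eq_zero _).1 h) h1
    · exact h
  have hZ1 : 1 ≤ Z := by
    rcases Nat.eq_zero_or_pos Z with h | h
    · exact absurd ((ZMod.val_eq_zero _).1 h) h2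
    · exact h
  have hv : v = ![(↑(K+Y+Z) : ZMod n), ↑Y, ↑Z] := by
    have e1 : ((Y:ℕ) : ZMod n) = v 1 := ZMod.natCast_rightInverse (v 1)
    have e2 : ((Z:ℕ) : ZMod n) = v 2 := ZMod.natCast_rightInverse (v 2)
    have eK : ((K:ℕ) : ZMod n) = v 0 - v 1 - v 2 := ZMod.natCast_rightInverse _
    have e0 : ((K+Y+Z : ℕ) : ZMod n) = v 0 := by
      push_cast [e1, e2, eK]; ring
    funext i
    fin_cases i
    · simpa using e0.symm
    · simpa using e1.symm
    · simpa using e2.symm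
  rw [hv]
  rcases Nat.eq_zero_or_pos K with hK0 | hK1
  · rw [hK0]
    simpa using seedP hn hY1 (by omega) hZ1 (by omega)
  rcases lt_trichotomy (Y+K) n with hYK | hYK | hYK
  · rcases lt_trichotomy (Z+K) n with hZK | hZK | hZK
    · have := memF hn K Y Z hY1 (by omega) hZ1 (by omega)
      exact this
    · -- B=0 plane
      have e : ((K+Y+Z : ℕ) : ZMod n) = ↑Y := by
        rw [show K+Y+Z = Y+n by omega]; exact cast_addn Y
      rw [e]
      rcases lt_trichotomy Y Z with h | h | h
      · exact memPa'' hn hY1 h (by omega)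
      · rw [h]; exact memDiag hn Z hZ1 (by omega)
      · exact sw_cl' (memPd'' hn (y := Z) (z := Y) hZ1 h (by omega))
    · exact memU hn (Z+K-(n+1)) (n-1-(K+Y)) K Y Z (by omega) (by omega) hY1 hZ1 (by omega)
  · -- C=0 plane
    have e : ((K+Y+Z : ℕ) : ZMod n) = ↑Z := by
      rw [show K+Y+Z = Z+n by omega]; exact cast_addn Z
    rw [e]
    rcases lt_trichotomy Y Z with h | h | h
    · exact memPd'' hn hY1 h (by omega)
    · rw [h]; exact memDiag hn Z hZ1 (by omega)
    · exact sw_cl' (memPa'' hn (a := Z) (z := Y) hZ1 h (by omega))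
  · rcases lt_trichotomy (Z+K) n with hZK | hZK | hZK
    · have := memU hn (Y+K-(n+1)) (n-1-(K+Z)) K Z Y (by omega) (by omega) hZ1 hY1 (by omega)
      have := sw_cl' this
      rwa [show K+Z+Y = K+Y+Z by omega] at this
    · have e : ((K+Y+Z : ℕ) : ZMod n) = ↑Y := by
        rw [show K+Y+Z = Y+n by omega]; exact cast_addn Y
      rw [e]
      exact sw_cl' (memPd'' hn (y := Z) (z := Y) hZ1 (by omega) (by omega))
    · obtain ⟨W, hW⟩ : ∃ W, K+Y+Z = W+n := ⟨K+Y+Z-n, by omega⟩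
      have e : ((K+Y+Z : ℕ) : ZMod n) = ((W:ℕ) : ZMod n) := by rw [hW]; exact cast_addn W
      rw [e]
      exact memBc hn (n-K) W Y Z (by omega) (by omega) (by omega) (by omega) (by omega)

lemma memQ1 (hn : 3 ≤ n) : ∀ t : ℕ,
    haveI : NeZero n := ⟨by omega⟩
    (![(↑(1+t) : ZMod n), 0, 1] : V n) ∈ cl n := by
  haveI : NeZero n := ⟨by omega⟩
  intro t
  induction t with
  | zero =>
    refine seed_mem (Or.inr (Or.inr ?_))
    norm_num
  | succ t iht =>
    have hu1 : (![(↑(1+(t+1)) : ZMod n), (1:ZMod n), 1] : V n) ∈ cl n := by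
      refine memInterior hn _ ?_ ?_ <;>
        simpa using zcast_ne_zero hn (a := 1) (by omega) (by omega)
    have hu2 : (![(↑(1+(t+1)) : ZMod n), (0:ZMod n) - 1, 1] : V n) ∈ cl n := by
      refine memInterior hn _ ?_ ?_
      · simp only [Matrix.cons_val_one, Matrix.head_cons, Matrix.cons_val_zero]
        intro h
        have : ((1:ℕ):ZMod n) = 0 := by push_cast; linear_combination -h
        exact (zcast_ne_zero hn (a := 1) (by omega) (by omega)) this
      · simpa using zcast_ne_zero hn (a := 1) (by omega) (by omega)
    refine cl_of_three hu1 hu2 iht ?_ ?_ ?_ ?_ ?_ ?_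
    · exact adjyE (by ring)
    · exact adjyE' rfl
    · exact adjxE' (by rw [show (1+(t+1)) = (1+t)+1 by omega, cast_succ]; ring)
    · refine vne1 ?_
      intro h
      have h2 : (1:ZMod n) + 1 = 0 := by linear_combination h
      have : ((2:ℕ) : ZMod n) = 0 := by push_cast; linear_combination h2
      exact (zcast_ne_zero hn (a := 2) (by omega) (by omega)) this
    · exact vne1 (by simpa using zcast_ne_zero hn (a := 1) (by omega) (by omega))
    · refine vne1 ?_
      intro h
      have : ((1:ℕ) : ZMod n) = 0 := by push_cast; linear_combination -h
      exact (zcast_ne_zero hn (a := 1) (by omega) (by omega)) this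
  
lemma memQ1' (hn : 3 ≤ n) (x : ZMod n) :
    haveI : NeZero n := ⟨by omega⟩
    (![x, 0, 1] : V n) ∈ cl n := by
  haveI : NeZero n := ⟨by omega⟩
  have := memQ1 hn (x - 1).val
  have e : ((1 + (x-1).val : ℕ) : ZMod n) = x := by
    push_cast [ZMod.natCast_rightInverse (x-1)]
    ring
  rwa [e] at this

lemma memQ2 (hn : 3 ≤ n) : ∀ d : ℕ, d + 2 ≤ n-1 → ∀ x : ZMod n,
    haveI : NeZero n := ⟨by omega⟩
    (![x, 0, (↑(d+2) : ZMod n)] : V n) ∈ cl n := by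
  haveI : NeZero n := ⟨by omega⟩
  intro d
  induction d with
  | zero =>
    intro hd x
    have hu1 : (![x, (1:ZMod n), ((2:ℕ):ZMod n)] : V n) ∈ cl n := by
      refine memInterior hn _ ?_ ?_
      · simpa using zcast_ne_zero hn (a := 1) (by omega) (by omega)
      · simpa using zcast_ne_zero hn (a := 2) (by omega) (by omega)
    have hu2 : (![x, (0:ZMod n)-1, ((2:ℕ):ZMod n)] : V n) ∈ cl n := by
      refine memInterior hn _ ?_ ?_
      · simp only [Matrix.cons_val_one, Matrix.head_cons, Matrix.cons_val_zero]
        intro h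
        have : ((1:ℕ) : ZMod n) = 0 := by push_cast; linear_combination -h
        exact (zcast_ne_zero hn (a := 1) (by omega) (by omega)) this
      · simpa using zcast_ne_zero hn (a := 2) (by omega) (by omega)
    have hu3 : (![x, (0:ZMod n), (1 : ZMod n)] : V n) ∈ cl n := memQ1' hn x
    refine cl_of_three hu1 hu2 hu3 ?_ ?_ ?_ ?_ ?_ ?_
    · exact adjyE (by ring)
    · exact adjyE' rfl
    · exact adjzE' (by push_cast; ring)
    · refine vne1 ?_
      intro h
      have : ((2:ℕ) : ZMod n) = 0 := by push_cast; linear_combination h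
      exact (zcast_ne_zero hn (a := 2) (by omega) (by omega)) this
    · exact vne1 (by simpa using zcast_ne_zero hn (a := 1) (by omega) (by omega))
    · refine vne2 ?_
      have := (zcast_ne hn (a := 1) (b := 2) (by omega) (by omega)).symm
      simpa using this
  | succ d ihd =>
    intro hd x
    have hu1 : (![x, (1:ZMod n), ((d+3:ℕ):ZMod n)] : V n) ∈ cl n := by
      refine memInterior hn _ ?_ ?_
      · simpa using zcast_ne_zero hn (a := 1) (by omega) (by omega)
      · simpa using zcast_ne_zero hn (a := d+3) (by omega) (by omega)
    have hu2 : (![x, (0:ZMod n)-1, ((d+3:ℕ):ZMod n)] : V n) ∈ cl n := by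
      refine memInterior hn _ ?_ ?_
      · simp only [Matrix.cons_val_one, Matrix.head_cons, Matrix.cons_val_zero]
        intro h
        have : ((1:ℕ) : ZMod n) = 0 := by push_cast; linear_combination -h
        exact (zcast_ne_zero hn (a := 1) (by omega) (by omega)) this
      · simpa using zcast_ne_zero hn (a := d+3) (by omega) (by omega)
    have hu3 : (![x, (0:ZMod n), ((d+2:ℕ):ZMod n)] : V n) ∈ cl n := ihd (by omega) x
    have e23 : ((d+2:ℕ) : ZMod n) = ((d+3:ℕ):ZMod n) - 1 := by push_cast; ring
    refine cl_of_three hu1 hu2 hu3 ?_ ?_ ?_ ?_ ?_ ?_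
    · exact adjyE (by ring)
    · exact adjyE' rfl
    · exact adjzE' e23
    · refine vne1 ?_
      intro h
      have : ((2:ℕ) : ZMod n) = 0 := by push_cast; linear_combination h
      exact (zcast_ne_zero hn (a := 2) (by omega) (by omega)) this
    · exact vne1 (by simpa using zcast_ne_zero hn (a := 1) (by omega) (by omega))
    · exact vne2 (zcast_ne hn (a := d+2) (b := d+3) (by omega) (by omega)).symm

lemma memZrow (hn : 3 ≤ n) (x z : ZMod n) (hz : z ≠ 0) :
    haveI : NeZero n := ⟨by omega⟩
    (![x, 0, z] : V n) ∈ cl n := by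
  haveI : NeZero n := ⟨by omega⟩
  set Z := z.val with hZ
  have hZ1 : 1 ≤ Z := by
    rcases Nat.eq_zero_or_pos Z with h | h
    · exact absurd ((ZMod.val_eq_zero _).1 h) hz
    · exact h
  have hZn : Z < n := ZMod.val_lt _
  have hzz : ((Z:ℕ) : ZMod n) = z := ZMod.natCast_rightInverse z
  rcases Nat.eq_or_lt_of_le hZ1 with h1 | h2
  · have := memQ1' hn x
    rwa [show (1:ZMod n) = z by rw [← hzz, ← h1]; norm_num] at this
  · have := memQ2 hn (Z-2) (by omega) x
    rwa [show ((Z-2)+2 : ℕ) = Z by omega, hzz] at this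

lemma memCorner (hn : 3 ≤ n) (x : ZMod n) :
    haveI : NeZero n := ⟨by omega⟩
    (![x, 0, 0] : V n) ∈ cl n := by
  haveI : NeZero n := ⟨by omega⟩
  have h1ne : ((1:ℕ) : ZMod n) ≠ 0 := zcast_ne_zero hn (by omega) (by omega)
  have hmne : ((n-1:ℕ) : ZMod n) ≠ 0 := zcast_ne_zero hn (by omega) (by omega)
  have hu1 : (![x, (0:ZMod n), (1:ZMod n)] : V n) ∈ cl n := memQ1' hn x
  have hu2 : (![x, (0:ZMod n), ((n-1:ℕ):ZMod n)] : V n) ∈ cl n := memZrow hn x _ hmne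
  have hu3 : (![x, ((n-1:ℕ):ZMod n), (0:ZMod n)] : V n) ∈ cl n := by
    have := memZrow hn x (((n-1:ℕ):ZMod n)) hmne
    exact sw_cl' this
  have em : ((n-1:ℕ) : ZMod n) = (0:ZMod n) - 1 := by
    rw [cast_pred (by omega)]
    simp [ZMod.natCast_self]
  refine cl_of_three hu1 hu2 hu3 ?_ ?_ ?_ ?_ ?_ ?_
  · exact adjzE (by ring)
  · exact adjzE' em
  · exact adjyE' em
  · refine vne2 ?_
    intro h
    rw [em] at h
    have : ((2:ℕ) : ZMod n) = 0 := by push_cast; linear_combination h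
    exact (zcast_ne_zero hn (a := 2) (by omega) (by omega)) this
  · exact vne1 hmne.symm
  · exact vne1 hmne.symm

lemma percolA (hn : 3 ≤ n) : ∀ v : V n, v ∈ cl n := by
  haveI : NeZero n := ⟨by omega⟩
  intro v
  have hv : v = ![v 0, v 1, v 2] := by
    funext i; fin_cases i <;> simp
  by_cases h1 : v 1 = 0
  · by_cases h2 : v 2 = 0
    · rw [hv, h1, h2]; exact memCorner hn (v 0)
    · rw [hv, h1]; exact memZrow hn (v 0) (v 2) h2
  · by_cases h2 : v 2 = 0
    · rw [hv, h2]
      have := memZrow hn (v 0) (v 1) h1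
      exact sw_cl' this
    · exact memInterior hn v h1 h2

end Dispatch
section Count
variable {n : ℕ}

lemma seed_count (hn : 3 ≤ n) : (seedA n).ncard ≤ (n-1)*(n-1) + 2 := by
  haveI : NeZero n := ⟨by omega⟩
  have hsplit : seedA n = {v : V n | v 0 = v 1 + v 2 ∧ v 1 ≠ 0 ∧ v 2 ≠ 0}
      ∪ {![1,1,0], ![1,0,1]} := rfl
  rw [hsplit]
  refine le_trans (Set.ncard_union_le _ _) ?_
  have h2 : ({![1,1,0], ![1,0,1]} : Set (V n)).ncard ≤ 2 := by
    refine le_trans (Set.ncard_insert_le _ _) ?_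
    simp [Set.ncard_singleton]
  have h1 : ({v : V n | v 0 = v 1 + v 2 ∧ v 1 ≠ 0 ∧ v 2 ≠ 0}).ncard ≤ (n-1)*(n-1) := by
    set f : ZMod n × ZMod n → V n := fun p => ![p.1 + p.2, p.1, p.2] with hf
    set S : Set (ZMod n × ZMod n) := ({0}ᶜ : Set (ZMod n)) ×ˢ ({0}ᶜ : Set (ZMod n)) with hS
    have hsub : {v : V n | v 0 = v 1 + v 2 ∧ v 1 ≠ 0 ∧ v 2 ≠ 0} ⊆ f '' S := by
      rintro v ⟨h0, h1, h2⟩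
      refine ⟨(v 1, v 2), ⟨h1, h2⟩, ?_⟩
      funext i; fin_cases i
      · simpa [hf] using h0.symm
      · simp [hf]
      · simp [hf]
    refine le_trans (Set.ncard_le_ncard hsub (Set.toFinite _)) ?_
    refine le_trans (Set.ncard_image_le (Set.toFinite _)) ?_
    have hcompl : ({0}ᶜ : Set (ZMod n)).ncard = n - 1 := by
      have h := Set.ncard_add_ncard_compl ({0} : Set (ZMod n))
      simp only [Set.ncard_singleton, Set.ncard_univ] at h
      have hcard : Nat.card (ZMod n) = n := by rw [Nat.card_eq_fintype_card, ZMod.card]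
      omega
    have : S.ncard = (n-1)*(n-1) := by
      have e1 : S.ncard = Nat.card S := (Nat.card_coe_set_eq S).symm
      have e2 : Nat.card S = Nat.card (({0}ᶜ : Set (ZMod n)) × ({0}ᶜ : Set (ZMod n))) :=
        Nat.card_congr (Equiv.Set.prod _ _)
      rw [e1, e2, Nat.card_prod, Nat.card_coe_set_eq, hcompl]
    exact le_of_eq this
  exact add_le_add h1 h2

end Count

theorem torus_three_dim_upper_bound (n : ℕ) (hn : 3 ≤ n) :
    sInf {k : ℕ | ∃ A : Set (Fin 3 → ZMod n),
      torusPercolates n 3 3 A ∧ A.ncard = k} ≤ n ^ 2 - 2 * n + 4 := by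
  haveI : NeZero n := ⟨by omega⟩
  have hperc : torusPercolates n 3 3 (seedA n) := fun v => percolA hn v
  have hmem : (seedA n).ncard ∈ {k : ℕ | ∃ A : Set (Fin 3 → ZMod n),
      torusPercolates n 3 3 A ∧ A.ncard = k} := ⟨seedA n, hperc, rfl⟩
  refine le_trans (Nat.sInf_le hmem) ?_
  refine le_trans (seed_count hn) ?_
  obtain ⟨m, rfl⟩ : ∃ m, n = m + 3 := ⟨n - 3, by omega⟩
  have h1 : (m+3)^2 = m*m + 6*m + 9 := by ring
  have h2 : (m+3-1)*(m+3-1) = m*m + 4*m + 4 := by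
    rw [show m+3-1 = m+2 by omega]; ring
  omega
end
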